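/- arXiv:1309.1794 — 4 statements merged into one kernel-verified Lean document; each statement's English description precedes it below -/
import Mathlib

section
/- Let G be an undirected connected graph on nodes 1,…,N, let f : ℝⁿ → ℝⁿ be continuously differentiable, B ∈ ℝ^{n×p}, C ∈ ℝ^{p×n}, and suppose the Assumption (OFP) holds. Let xᵢ : [0,∞) → ℝⁿ (i = 1,…,N) and kᵢⱼ : [0,∞) → ℝ be continuously differentiable functions solving the adaptively coupled system. If all xᵢ(t) and kᵢⱼ(t) are bounded on [0,∞) and xᵢ(t) ∈ X for all t ≥ 0 and all i, then ỹᵢ(t) → 0 as t → ∞ for every i = 1,…,N; i.e., the outputs of the N systems synchronize. -/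
open Matrix Filter Topology

/- ## Auxiliary lemmas -/

lemma hasDerivAt_dot {m : ℕ} {u v : ℝ → Fin m → ℝ} {u' v' : Fin m → ℝ} {t : ℝ}
    (hu : HasDerivAt u u' t) (hv : HasDerivAt v v' t) :
    HasDerivAt (fun s => u s ⬝ᵥ v s) (u' ⬝ᵥ v t + u t ⬝ᵥ v') t := by
  simp only [dotProduct]
  rw [← Finset.sum_add_distrib]
  exact HasDerivAt.fun_sum fun a _ =>
    ((hasDerivAt_pi.1 hu a).mul (hasDerivAt_pi.1 hv a))

lemma hasDerivAt_mulVec {m m' : ℕ} (M : Matrix (Fin m') (Fin m) ℝ)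
    {v : ℝ → Fin m → ℝ} {v' : Fin m → ℝ} {t : ℝ} (hv : HasDerivAt v v' t) :
    HasDerivAt (fun s => M *ᵥ v s) (M *ᵥ v') t := by
  have := (M.mulVecLin.toContinuousLinearMap.hasFDerivAt (x := v t)).comp_hasDerivAt t hv
  exact this

lemma dotProduct_sum' {m : ℕ} {ι : Type*} (s : Finset ι) (v : Fin m → ℝ) (f : ι → Fin m → ℝ) :
    v ⬝ᵥ (∑ i ∈ s, f i) = ∑ i ∈ s, v ⬝ᵥ f i := by
  simp only [dotProduct, Finset.sum_apply, Finset.mul_sum]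
  exact Finset.sum_comm

lemma sum_dotProduct' {m : ℕ} {ι : Type*} (s : Finset ι) (v : Fin m → ℝ) (f : ι → Fin m → ℝ) :
    (∑ i ∈ s, f i) ⬝ᵥ v = ∑ i ∈ s, f i ⬝ᵥ v := by
  rw [dotProduct_comm, dotProduct_sum']
  exact Finset.sum_congr rfl fun i _ => dotProduct_comm _ _

lemma mulVec_sum' {m m' : ℕ} {ι : Type*} (s : Finset ι) (M : Matrix (Fin m') (Fin m) ℝ)
    (f : ι → Fin m → ℝ) : M *ᵥ (∑ i ∈ s, f i) = ∑ i ∈ s, M *ᵥ f i := by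
  have := map_sum M.mulVecLin f s
  simpa only [Matrix.mulVecLin_apply] using this

lemma abs_dot_le {m : ℕ} (u v : Fin m → ℝ) : |u ⬝ᵥ v| ≤ m * ‖u‖ * ‖v‖ := by
  calc |u ⬝ᵥ v| ≤ ∑ a, |u a * v a| := Finset.abs_sum_le_sum_abs _ _
    _ ≤ ∑ _a : Fin m, ‖u‖ * ‖v‖ := by
        apply Finset.sum_le_sum
        intro a _
        rw [abs_mul]
        have h1 : |u a| ≤ ‖u‖ := by simpa [Real.norm_eq_abs] using norm_le_pi_norm u a
        have h2 : |v a| ≤ ‖v‖ := by simpa [Real.norm_eq_abs] using norm_le_pi_norm v a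
        exact mul_le_mul h1 h2 (abs_nonneg _) (norm_nonneg _)
    _ = m * ‖u‖ * ‖v‖ := by simp [Finset.card_univ, mul_assoc]

lemma norm_mulVec_le {a b : ℕ} (M : Matrix (Fin a) (Fin b) ℝ) (v : Fin b → ℝ) :
    ‖M *ᵥ v‖ ≤ ‖M.mulVecLin.toContinuousLinearMap‖ * ‖v‖ := by
  simpa using M.mulVecLin.toContinuousLinearMap.le_opNorm v

lemma dot_self_nonneg' {m : ℕ} (v : Fin m → ℝ) : 0 ≤ v ⬝ᵥ v :=
  Finset.sum_nonneg fun a _ => mul_self_nonneg _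

lemma norm_sq_le_dot {m : ℕ} (v : Fin m → ℝ) : ‖v‖ ^ 2 ≤ v ⬝ᵥ v := by
  have h : ‖v‖ ≤ Real.sqrt (v ⬝ᵥ v) := by
    rw [pi_norm_le_iff_of_nonneg (Real.sqrt_nonneg _)]
    intro a
    rw [Real.norm_eq_abs, ← Real.sqrt_sq_eq_abs]
    apply Real.sqrt_le_sqrt
    have : (v a) ^ 2 = v a * v a := sq (v a) ▸ by ring
    rw [this]
    exact Finset.single_le_sum (f := fun b => v b * v b)
      (fun b _ => mul_self_nonneg _) (Finset.mem_univ a)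
  nlinarith [Real.sq_sqrt (dot_self_nonneg' v), norm_nonneg v, Real.sqrt_nonneg (v ⬝ᵥ v)]

lemma const_of_adj_eq {N : ℕ} {G : SimpleGraph (Fin N)} (hG : G.Connected)
    {y : Fin N → ℝ} (h : ∀ i j, G.Adj i j → y i = y j) (i j : Fin N) : y i = y j := by
  obtain ⟨w⟩ := hG i j
  induction w with
  | nil => rfl
  | cons hadj _ ih => exact (h _ _ hadj).trans ih

lemma gap_scalar {N : ℕ} (G : SimpleGraph (Fin N)) [DecidableRel G.Adj] (hG : G.Connected) :
    ∃ lam > 0, ∀ y : Fin N → ℝ, (∑ i, y i) = 0 →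
      lam * ∑ i, (y i)^2 ≤ ∑ i, ∑ j, (if G.Adj i j then (y i - y j)^2 else 0) := by
  classical
  set Q : (Fin N → ℝ) → ℝ := fun y => ∑ i, ∑ j, (if G.Adj i j then (y i - y j)^2 else 0) with hQ
  have hQcont : Continuous Q := by
    apply continuous_finset_sum; intro i _; apply continuous_finset_sum; intro j _
    by_cases h : G.Adj i j <;> simp [h] <;> fun_prop
  have hQnonneg : ∀ y, 0 ≤ Q y := by
    intro y; apply Finset.sum_nonneg; intro i _; apply Finset.sum_nonneg; intro j _
    positivity
  have hQhom : ∀ (c : ℝ) y, Q (c • y) = c^2 * Q y := by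
    intro c y
    simp only [hQ, Finset.mul_sum]
    congr 1; ext i; congr 1; ext j
    by_cases h : G.Adj i j <;> simp [h, Pi.smul_apply, smul_eq_mul] <;> ring
  set S : Set (Fin N → ℝ) := {y | (∑ i, y i) = 0 ∧ (∑ i, (y i)^2) = 1} with hS
  have key : ∀ y ∈ S, 0 < Q y := by
    intro y hy
    rcases lt_or_eq_of_le (hQnonneg y) with h | h
    · exact h
    exfalso
    have hedge : ∀ i j, G.Adj i j → y i = y j := by
      intro i j hij
      have hz : ∀ i ∈ Finset.univ, ∀ j ∈ (Finset.univ : Finset (Fin N)),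
          (if G.Adj i j then (y i - y j)^2 else 0) = 0 := by
        have := (Finset.sum_eq_zero_iff_of_nonneg (fun i _ => Finset.sum_nonneg (fun j _ => by positivity))).1 h.symm
        intro i hi j hj
        exact (Finset.sum_eq_zero_iff_of_nonneg (fun j _ => by positivity)).1 (this i hi) j hj
      have := hz i (Finset.mem_univ i) j (Finset.mem_univ j)
      rw [if_pos hij] at this
      have := pow_eq_zero_iff (n := 2) (by norm_num) |>.1 this
      linarith [sub_eq_zero.1 this]
    have hconst := const_of_adj_eq hG hedge
    have hne : Nonempty (Fin N) := hG.nonempty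
    obtain ⟨i0⟩ := hne
    have hsum : (∑ i, y i) = (N : ℝ) * y i0 := by
      rw [Finset.sum_congr rfl (fun i _ => hconst i i0)]
      simp [Finset.card_univ, mul_comm]
    have hyi0 : y i0 = 0 := by
      have hN : (N : ℝ) ≠ 0 := by
        have : 0 < N := Fin.pos i0
        positivity
      have := hy.1; rw [hsum] at this
      exact (mul_eq_zero.1 this).resolve_left hN
    have : (∑ i, (y i)^2) = 0 := by
      apply Finset.sum_eq_zero; intro i _; rw [hconst i i0, hyi0]; ring
    rw [hy.2] at this; norm_num at this
  by_cases hSne : S.Nonempty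
  · have hScl : IsClosed S := by
      have h1 : IsClosed {y : Fin N → ℝ | (∑ i, y i) = 0} :=
        isClosed_eq (by fun_prop) continuous_const
      have h2 : IsClosed {y : Fin N → ℝ | (∑ i, (y i)^2) = 1} :=
        isClosed_eq (by fun_prop) continuous_const
      exact h1.inter h2
    have hSbdd : S ⊆ Metric.closedBall 0 1 := by
      intro y hy
      simp only [Metric.mem_closedBall, dist_zero_right]
      rw [pi_norm_le_iff_of_nonneg zero_le_one]
      intro i
      have h1 : (y i)^2 ≤ 1 := by
        rw [← hy.2]
        exact Finset.single_le_sum (f := fun i => (y i)^2) (fun i _ => by positivity) (Finset.mem_univ i)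
      rw [Real.norm_eq_abs, ← abs_one]
      exact abs_le_abs (by nlinarith [abs_nonneg (y i), le_abs_self (y i)]) (by nlinarith [abs_nonneg (y i), neg_abs_le (y i)])
    have hScomp : IsCompact S := (isCompact_closedBall 0 1).of_isClosed_subset hScl hSbdd
    obtain ⟨y₀, hy₀S, hy₀min⟩ := hScomp.exists_isMinOn hSne hQcont.continuousOn
    refine ⟨Q y₀, key y₀ hy₀S, ?_⟩
    intro y hy
    by_cases hzero : (∑ i, (y i)^2) = 0
    · rw [hzero, mul_zero]; exact hQnonneg y
    · have hpos : 0 < ∑ i, (y i)^2 :=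
        lt_of_le_of_ne (Finset.sum_nonneg fun i _ => by positivity) (Ne.symm hzero)
      set c := Real.sqrt (∑ i, (y i)^2) with hc
      have hcpos : 0 < c := Real.sqrt_pos.2 hpos
      have hc2 : c^2 = ∑ i, (y i)^2 := Real.sq_sqrt hpos.le
      have hmem : c⁻¹ • y ∈ S := by
        constructor
        · simp only [Pi.smul_apply, smul_eq_mul, ← Finset.mul_sum, hy, mul_zero]
        · have : (∑ i, (c⁻¹ * y i)^2) = c⁻¹^2 * ∑ i, (y i)^2 := by
            rw [Finset.mul_sum]; congr 1; ext i; ring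
          simp only [Pi.smul_apply, smul_eq_mul, this, ← hc2]
          field_simp
      have h3 : Q y₀ ≤ Q (c⁻¹ • y) := hy₀min hmem
      rw [hQhom] at h3
      have h2 : Q y₀ * c^2 ≤ Q y := by
        calc Q y₀ * c^2 ≤ (c⁻¹^2 * Q y) * c^2 := by nlinarith [sq_nonneg c]
          _ = Q y := by field_simp
      show Q y₀ * (∑ i, (y i)^2) ≤ Q y
      rw [← hc2]; exact h2
  · refine ⟨1, one_pos, ?_⟩
    intro y hy
    by_cases hzero : (∑ i, (y i)^2) = 0
    · rw [hzero, mul_zero]; exact hQnonneg y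
    · exfalso
      have hpos : 0 < ∑ i, (y i)^2 :=
        lt_of_le_of_ne (Finset.sum_nonneg fun i _ => by positivity) (Ne.symm hzero)
      set c := Real.sqrt (∑ i, (y i)^2) with hc
      have hcpos : 0 < c := Real.sqrt_pos.2 hpos
      have hc2 : c^2 = ∑ i, (y i)^2 := Real.sq_sqrt hpos.le
      apply hSne
      refine ⟨c⁻¹ • y, ?_, ?_⟩
      · simp only [Pi.smul_apply, smul_eq_mul, ← Finset.mul_sum, hy, mul_zero]
      · have : (∑ i, (c⁻¹ * y i)^2) = c⁻¹^2 * ∑ i, (y i)^2 := by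
          rw [Finset.mul_sum]; congr 1; ext i; ring
        simp only [Pi.smul_apply, smul_eq_mul, this, ← hc2]
        field_simp

lemma gap_vec {N p : ℕ} (G : SimpleGraph (Fin N)) [DecidableRel G.Adj] (hG : G.Connected) :
    ∃ lam > 0, ∀ y : Fin N → (Fin p → ℝ), (∑ i, y i) = 0 →
      lam * ∑ i, (y i ⬝ᵥ y i) ≤ ∑ i, ∑ j, (if G.Adj i j then (y i - y j) ⬝ᵥ (y i - y j) else 0) := by
  obtain ⟨lam, hlam, hgap⟩ := gap_scalar G hG
  refine ⟨lam, hlam, ?_⟩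
  intro y hy
  have hlhs : lam * (∑ i, y i ⬝ᵥ y i) = ∑ a : Fin p, lam * ∑ i, (y i a)^2 := by
    rw [← Finset.mul_sum]
    congr 1
    rw [Finset.sum_comm]
    refine Finset.sum_congr rfl fun i _ => ?_
    simp [dotProduct, sq]
  have hrhs : (∑ i, ∑ j, (if G.Adj i j then (y i - y j) ⬝ᵥ (y i - y j) else 0))
      = ∑ a : Fin p, ∑ i, ∑ j, (if G.Adj i j then (y i a - y j a)^2 else 0) := by
    have step1 : (∑ i, ∑ j, (if G.Adj i j then (y i - y j) ⬝ᵥ (y i - y j) else 0))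
        = ∑ i, ∑ j, ∑ a : Fin p, (if G.Adj i j then (y i a - y j a)^2 else 0) := by
      refine Finset.sum_congr rfl fun i _ => ?_
      refine Finset.sum_congr rfl fun j _ => ?_
      by_cases h : G.Adj i j
      · simp [h, dotProduct, sq, Pi.sub_apply]
      · simp [h]
    rw [step1]
    rw [show (∑ i, ∑ j, ∑ a : Fin p, (if G.Adj i j then (y i a - y j a)^2 else 0))
        = ∑ i, ∑ a : Fin p, ∑ j, (if G.Adj i j then (y i a - y j a)^2 else 0) from
      Finset.sum_congr rfl fun i _ => Finset.sum_comm, Finset.sum_comm]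
  rw [hlhs, hrhs]
  apply Finset.sum_le_sum
  intro a _
  exact hgap (fun i => y i a) (by rw [← Finset.sum_apply]; rw [hy]; rfl)

lemma barbalat {g : ℝ → ℝ} {L A : ℝ} (hL : 0 < L)
    (hg0 : ∀ t, 0 ≤ g t)
    (hgcont : Continuous g)
    (hlip : ∀ s t : ℝ, |g t - g s| ≤ L * |t - s|)
    (hint : ∀ t, 0 ≤ t → ∫ s in (0:ℝ)..t, g s ≤ A) :
    Tendsto g atTop (𝓝 0) := by
  set F : ℝ → ℝ := fun t => ∫ s in (0:ℝ)..t, g s with hF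
  have hInt : ∀ a b : ℝ, IntervalIntegrable g MeasureTheory.volume a b :=
    fun a b => hgcont.intervalIntegrable a b
  have hFdiff : ∀ s t : ℝ, F t - F s = ∫ u in s..t, g u := by
    intro s t
    have := intervalIntegral.integral_add_adjacent_intervals (hInt 0 s) (hInt s t)
    simp only [hF]; linarith
  have hFmono : Monotone F := by
    intro s t hst
    have h0 : 0 ≤ ∫ u in s..t, g u :=
      intervalIntegral.integral_nonneg hst (fun u _ => hg0 u)
    have := hFdiff s t; linarith
  have hA0 : 0 ≤ A := by
    have := hint 0 le_rfl; simp at this; linarith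
  have hFbdd : ∀ t, F t ≤ A := by
    intro t
    rcases le_total 0 t with h | h
    · exact hint t h
    · have : F t ≤ F 0 := hFmono h
      simp only [hF, intervalIntegral.integral_same] at this ⊢
      linarith
  have hlim : Tendsto F atTop (𝓝 (⨆ t, F t)) :=
    tendsto_atTop_ciSup hFmono ⟨A, fun y hy => by obtain ⟨t, rfl⟩ := hy; exact hFbdd t⟩
  rw [Metric.tendsto_atTop]
  intro ε hε
  set δ : ℝ := ε / (2 * L) with hδ
  have hδpos : 0 < δ := by positivity
  have hshift : Tendsto (fun t => F (t + δ)) atTop (𝓝 (⨆ t, F t)) :=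
    hlim.comp (tendsto_atTop_add_const_right _ δ tendsto_id)
  have hdiff : Tendsto (fun t => F (t + δ) - F t) atTop (𝓝 0) := by
    have := hshift.sub hlim; simpa using this
  have hev : ∀ᶠ t in atTop, |F (t + δ) - F t| < ε * δ / 2 := by
    have := (Metric.tendsto_atTop.1 hdiff) (ε * δ / 2) (by positivity)
    obtain ⟨T, hT⟩ := this
    filter_upwards [eventually_ge_atTop T] with t ht
    have := hT t ht
    simpa [Real.dist_eq] using this
  obtain ⟨T, hT⟩ := hev.exists_forall_of_atTop
  refine ⟨T, fun t ht => ?_⟩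
  rw [Real.dist_eq, sub_zero, abs_of_nonneg (hg0 t)]
  by_contra hcon
  push_neg at hcon
  have hbig : ∀ u ∈ Set.Icc t (t + δ), ε / 2 ≤ g u := by
    intro u hu
    have h1 : |g u - g t| ≤ L * |u - t| := hlip t u
    have h2 : |u - t| ≤ δ := by
      rw [abs_of_nonneg (by linarith [hu.1])]; linarith [hu.2]
    have h3 : g t - g u ≤ L * δ := by
      have := abs_le.1 h1
      nlinarith [this.1, abs_nonneg (u - t)]
    have hLδ : L * δ = ε / 2 := by
      rw [hδ, mul_div_assoc', div_eq_div_iff (by positivity) two_ne_zero]; ring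
    linarith
  have hlow : ε / 2 * δ ≤ F (t + δ) - F t := by
    rw [hFdiff t (t + δ)]
    have : ∫ u in t..(t + δ), (ε / 2 : ℝ) ≤ ∫ u in t..(t + δ), g u := by
      apply intervalIntegral.integral_mono_on (by linarith)
        (intervalIntegrable_const) (hInt t (t + δ))
      exact fun u hu => hbig u hu
    simp only [intervalIntegral.integral_const, smul_eq_mul] at this
    calc ε / 2 * δ = (t + δ - t) * (ε / 2) := by ring
      _ ≤ _ := this
  have := hT t ht
  have : F (t + δ) - F t < ε * δ / 2 := lt_of_abs_lt this
  nlinarith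

set_option maxHeartbeats 2000000 in
/-- Adaptive synchronization of diffusively coupled compartmental ODEs:
under Assumption (OFP), bounded solutions of the adaptively coupled system remaining in the
convex set `X` have synchronizing outputs: `ỹᵢ(t) = C (xᵢ(t) - x̄(t)) → 0` as `t → ∞`. -/
theorem adaptive_ode_synchronization
    {n p N : ℕ}
    -- the undirected connected interconnection graph
    (G : SimpleGraph (Fin N)) (hG : G.Connected)
    -- the continuously differentiable vector field `f`, with Jacobian `J`
    (f : (Fin n → ℝ) → (Fin n → ℝ))
    (J : (Fin n → ℝ) → Matrix (Fin n) (Fin n) ℝ)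
    (hf : ∀ z, HasFDerivAt f ((J z).mulVecLin.toContinuousLinearMap) z)
    (hJcont : Continuous J)
    -- input and output matrices
    (B : Matrix (Fin n) (Fin p) ℝ) (C : Matrix (Fin p) (Fin n) ℝ)
    -- Assumption (OFP)
    (X : Set (Fin n → ℝ)) (hX : Convex ℝ X)
    (θ : ℝ) (hθ : 0 < θ)
    (P : Matrix (Fin n) (Fin n) ℝ) (hP : P.PosDef)
    (hLMI : ∀ z ∈ X, ∀ v : Fin n → ℝ,
      v ⬝ᵥ ((P * J z + (J z)ᵀ * P) *ᵥ v) ≤ θ * ((C *ᵥ v) ⬝ᵥ (C *ᵥ v)))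
    (hPB : P * B = Cᵀ)
    -- a continuously differentiable solution of the adaptively coupled system
    (x : Fin N → ℝ → (Fin n → ℝ)) (k : Fin N → Fin N → ℝ → ℝ)
    (γ : Fin N → Fin N → ℝ)
    (hγsym : ∀ i j, γ i j = γ j i)
    (hγpos : ∀ i j, G.Adj i j → 0 < γ i j)
    (hksym : ∀ i j t, k i j t = k j i t)
    (hknonadj : ∀ i j, ¬ G.Adj i j → ∀ t, k i j t = 0)
    (hxode : ∀ i, ∀ t, 0 ≤ t →
      HasDerivAt (x i)
        (f (x i t) + B *ᵥ (∑ j, k i j t • (C *ᵥ x j t - C *ᵥ x i t))) t)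
    (hkode : ∀ i j, G.Adj i j → ∀ t, 0 ≤ t →
      HasDerivAt (k i j)
        (γ i j * ((C *ᵥ x i t - C *ᵥ x j t) ⬝ᵥ (C *ᵥ x i t - C *ᵥ x j t))) t)
    -- boundedness of the solutions on `[0,∞)`
    (hbdd : ∃ M : ℝ, ∀ t, 0 ≤ t → (∀ i, ‖x i t‖ ≤ M) ∧ (∀ i j, |k i j t| ≤ M))
    -- the states remain in `X`
    (hXinv : ∀ i, ∀ t, 0 ≤ t → x i t ∈ X) :
    -- conclusion: the outputs synchronize
    ∀ i, Tendsto (fun t => C *ᵥ (x i t - (N : ℝ)⁻¹ • ∑ j, x j t)) atTop (𝓝 0) := by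
  classical
  haveI hdec : DecidableRel G.Adj := fun i j => Classical.propDecidable _
  have hNpos : 0 < N := by
    obtain ⟨i⟩ := hG.nonempty; exact i.pos
  have hNR : (0:ℝ) < N := by exact_mod_cast hNpos
  obtain ⟨lam, hlam, hgap⟩ := gap_vec (p := p) G hG
  set κ : ℝ := (θ + 1) / lam with hκ
  have hκpos : 0 < κ := by positivity
  set xb : ℝ → (Fin n → ℝ) := fun t => (N : ℝ)⁻¹ • ∑ j, x j t with hxbd
  set e : Fin N → ℝ → (Fin n → ℝ) := fun i t => x i t - xb t with hed
  set yt : Fin N → ℝ → (Fin p → ℝ) := fun i t => C *ᵥ e i t with hytd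
  set g : ℝ → ℝ := fun t => ∑ i, (yt i t) ⬝ᵥ (yt i t) with hgd0
  set d : Fin N → ℝ → (Fin n → ℝ) :=
    fun i t => f (x i t) + B *ᵥ (∑ j, k i j t • (C *ᵥ x j t - C *ᵥ x i t)) with hdd
  set de : Fin N → ℝ → (Fin n → ℝ) := fun i t => d i t - (N : ℝ)⁻¹ • ∑ j, d j t with hded
  set V : ℝ → ℝ := fun t => (∑ i, (e i t) ⬝ᵥ (P *ᵥ e i t))
    + ∑ i, ∑ j, (if G.Adj i j then (2 * γ i j)⁻¹ else 0) * (k i j t - κ)^2 with hVd0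
  set W : Fin N → Fin N → ℝ → ℝ := fun i j t => if G.Adj i j then
    (k i j t - κ) * ((C *ᵥ x i t - C *ᵥ x j t) ⬝ᵥ (C *ᵥ x i t - C *ᵥ x j t)) else 0 with hWd0
  set V' : ℝ → ℝ := fun t =>
    (∑ i, ((de i t) ⬝ᵥ (P *ᵥ e i t) + (e i t) ⬝ᵥ (P *ᵥ de i t))) + ∑ i, ∑ j, W i j t with hV'd0
  -- basic identities
  have hesum : ∀ t, ∑ i, e i t = 0 := by
    intro t
    funext a
    simp only [hed, hxbd, Finset.sum_apply, Pi.sub_apply, Pi.smul_apply, smul_eq_mul,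
      Pi.zero_apply, Finset.sum_sub_distrib, Finset.sum_const, Finset.card_univ,
      Fintype.card_fin, nsmul_eq_mul]
    field_simp
    ring
  have hysum : ∀ t, ∑ i, yt i t = 0 := by
    intro t
    simp only [hytd]
    rw [← mulVec_sum', hesum t, Matrix.mulVec_zero]
  have hYdiff : ∀ i j t, C *ᵥ x i t - C *ᵥ x j t = yt i t - yt j t := by
    intro i j t
    simp only [hytd, hed, Matrix.mulVec_sub]
    abel
  have hdE : ∀ i t, 0 ≤ t → HasDerivAt (e i) (de i t) t := by
    intro i t ht
    simp only [hed, hded, hdd, hxbd]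
    exact (hxode i t ht).sub ((HasDerivAt.fun_sum (fun j _ => hxode j t ht)).const_smul ((N:ℝ)⁻¹))
  have hWd : ∀ i j t, 0 ≤ t →
      HasDerivAt (fun s => (if G.Adj i j then (2 * γ i j)⁻¹ else 0) * (k i j s - κ)^2)
        (W i j t) t := by
    intro i j t ht
    by_cases h : G.Adj i j
    · simp only [hWd0, if_pos h]
      have h1 : HasDerivAt (fun s => (k i j s - κ)^2)
          ((2:ℕ) * (k i j t - κ)^1 *
            (γ i j * ((C *ᵥ x i t - C *ᵥ x j t) ⬝ᵥ (C *ᵥ x i t - C *ᵥ x j t)))) t :=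
        ((hkode i j h t ht).sub_const κ).pow 2
      have h2 := h1.const_mul ((2 * γ i j)⁻¹)
      refine h2.congr_deriv ?_
      have hγ := hγpos i j h
      rw [inv_mul_eq_iff_eq_mul₀ (mul_ne_zero two_ne_zero hγ.ne')]
      push_cast
      ring
    · simp only [hWd0, if_neg h, zero_mul]
      exact hasDerivAt_const t 0
  have hVderiv : ∀ t, 0 ≤ t → HasDerivAt V (V' t) t := by
    intro t ht
    simp only [hVd0, hV'd0]
    exact (HasDerivAt.fun_sum fun i _ =>
        hasDerivAt_dot (hdE i t ht) (hasDerivAt_mulVec P (hdE i t ht))).add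
      (HasDerivAt.fun_sum fun i _ => HasDerivAt.fun_sum fun j _ => hWd i j t ht)
  have hVnn : ∀ t, 0 ≤ V t := by
    intro t
    simp only [hVd0]
    apply add_nonneg
    · refine Finset.sum_nonneg fun i _ => ?_
      have := hP.posSemidef.dotProduct_mulVec_nonneg (e i t)
      simpa using this
    · refine Finset.sum_nonneg fun i _ => Finset.sum_nonneg fun j _ => mul_nonneg ?_ (sq_nonneg _)
      split_ifs with h
      · have := hγpos i j h; positivity
      · exact le_rfl
  -- the key Lyapunov derivative inequality
  have hV'le : ∀ t, 0 ≤ t → V' t ≤ -(g t) := by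
    intro t ht
    have hEsum : ∑ i, e i t = 0 := hesum t
    set w : Fin N → (Fin p → ℝ) := fun i => ∑ j, k i j t • (yt j t - yt i t) with hwdef
    have hd_eq : ∀ i, d i t = f (x i t) + B *ᵥ w i := by
      intro i
      simp only [hdd, hwdef]
      have hsum : (∑ j, k i j t • (C *ᵥ x j t - C *ᵥ x i t))
          = ∑ j, k i j t • (yt j t - yt i t) :=
        Finset.sum_congr rfl fun j _ => by rw [hYdiff j i t]
      rw [hsum]
    -- Step A : drop constant shifts thanks to ∑ e = 0
    have key1 : ∀ (cv : Fin n → ℝ) (a : Fin N → Fin n → ℝ),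
        (∑ i, ((a i + cv) ⬝ᵥ (P *ᵥ e i t) + e i t ⬝ᵥ (P *ᵥ (a i + cv))))
          = ∑ i, (a i ⬝ᵥ (P *ᵥ e i t) + e i t ⬝ᵥ (P *ᵥ a i)) := by
      intro cv a
      have h1 : ∑ i, cv ⬝ᵥ (P *ᵥ e i t) = 0 := by
        have e2 : ∑ i, cv ⬝ᵥ (P *ᵥ e i t) = cv ⬝ᵥ (∑ i, (P *ᵥ e i t)) :=
          (dotProduct_sum' Finset.univ cv (fun i => P *ᵥ e i t)).symm
        have e1 : ∑ i, (P *ᵥ e i t) = P *ᵥ (∑ i, e i t) :=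
          (mulVec_sum' Finset.univ P (fun i => e i t)).symm
        rw [e2, e1, hEsum, Matrix.mulVec_zero, dotProduct_zero]
      have h2 : ∑ i, e i t ⬝ᵥ (P *ᵥ cv) = 0 := by
        have e3 : ∑ i, e i t ⬝ᵥ (P *ᵥ cv) = (∑ i, e i t) ⬝ᵥ (P *ᵥ cv) :=
          (sum_dotProduct' Finset.univ (P *ᵥ cv) (fun i => e i t)).symm
        rw [e3, hEsum, zero_dotProduct]
      calc (∑ i, ((a i + cv) ⬝ᵥ (P *ᵥ e i t) + e i t ⬝ᵥ (P *ᵥ (a i + cv))))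
          = ∑ i, ((a i ⬝ᵥ (P *ᵥ e i t) + e i t ⬝ᵥ (P *ᵥ a i))
              + (cv ⬝ᵥ (P *ᵥ e i t) + e i t ⬝ᵥ (P *ᵥ cv))) := by
            refine Finset.sum_congr rfl fun i _ => ?_
            rw [add_dotProduct, Matrix.mulVec_add, dotProduct_add]
            ring
        _ = _ := by
            rw [Finset.sum_add_distrib, Finset.sum_add_distrib, Finset.sum_add_distrib, h1, h2]
            ring
    have hstate : (∑ i, (de i t ⬝ᵥ (P *ᵥ e i t) + e i t ⬝ᵥ (P *ᵥ de i t)))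
        = ∑ i, (((f (x i t) - f (xb t)) + B *ᵥ w i) ⬝ᵥ (P *ᵥ e i t)
            + e i t ⬝ᵥ (P *ᵥ ((f (x i t) - f (xb t)) + B *ᵥ w i))) := by
      have hrw : ∀ i, de i t = ((f (x i t) - f (xb t)) + B *ᵥ w i)
          + (f (xb t) - (N : ℝ)⁻¹ • ∑ j, d j t) := by
        intro i
        simp only [hded, hd_eq i]
        abel
      calc (∑ i, (de i t ⬝ᵥ (P *ᵥ e i t) + e i t ⬝ᵥ (P *ᵥ de i t)))
          = ∑ i, ((((f (x i t) - f (xb t)) + B *ᵥ w i)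
                + (f (xb t) - (N : ℝ)⁻¹ • ∑ j, d j t)) ⬝ᵥ (P *ᵥ e i t)
              + e i t ⬝ᵥ (P *ᵥ (((f (x i t) - f (xb t)) + B *ᵥ w i)
                + (f (xb t) - (N : ℝ)⁻¹ • ∑ j, d j t)))) := by
            refine Finset.sum_congr rfl fun i _ => ?_
            rw [hrw i]
        _ = _ := key1 _ _
    have hsplit : (∑ i, (((f (x i t) - f (xb t)) + B *ᵥ w i) ⬝ᵥ (P *ᵥ e i t)
            + e i t ⬝ᵥ (P *ᵥ ((f (x i t) - f (xb t)) + B *ᵥ w i))))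
        = (∑ i, ((f (x i t) - f (xb t)) ⬝ᵥ (P *ᵥ e i t)
              + e i t ⬝ᵥ (P *ᵥ (f (x i t) - f (xb t)))))
          + ∑ i, ((B *ᵥ w i) ⬝ᵥ (P *ᵥ e i t) + e i t ⬝ᵥ (P *ᵥ (B *ᵥ w i))) := by
      rw [← Finset.sum_add_distrib]
      refine Finset.sum_congr rfl fun i _ => ?_
      rw [add_dotProduct, Matrix.mulVec_add, dotProduct_add]
      ring
    -- Step C : mean value theorem + LMI
    have hxbX : xb t ∈ X := by
      have hxbeq : xb t = ∑ j, (N:ℝ)⁻¹ • x j t := by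
        simp only [hxbd]; rw [Finset.smul_sum]
      rw [hxbeq]
      refine hX.sum_mem (fun j _ => by positivity) ?_ (fun j _ => hXinv j t ht)
      rw [Finset.sum_const, Finset.card_univ, Fintype.card_fin, nsmul_eq_mul]
      field_simp
    have hf_part : ∀ i, (f (x i t) - f (xb t)) ⬝ᵥ (P *ᵥ e i t)
        + e i t ⬝ᵥ (P *ᵥ (f (x i t) - f (xb t))) ≤ θ * (yt i t ⬝ᵥ yt i t) := by
      intro i
      have hEi : e i t = x i t - xb t := by simp only [hed]
      have hseg : ∀ s : ℝ, 0 ≤ s → s ≤ 1 → xb t + s • e i t ∈ X := by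
        intro s hs0 hs1
        have hmem := hX hxbX (hXinv i t ht) (by linarith : (0:ℝ) ≤ 1 - s) hs0 (by ring)
        have : (1 - s) • xb t + s • x i t = xb t + s • e i t := by
          rw [hEi, smul_sub, sub_smul, one_smul]
          abel
        rwa [this] at hmem
      set φ : ℝ → ℝ := fun s => (f (xb t + s • e i t) - f (xb t)) ⬝ᵥ (P *ᵥ e i t)
        + e i t ⬝ᵥ (P *ᵥ (f (xb t + s • e i t) - f (xb t))) with hφd0
      have hφder : ∀ s : ℝ, HasDerivAt φ
          ((J (xb t + s • e i t) *ᵥ e i t) ⬝ᵥ (P *ᵥ e i t)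
            + e i t ⬝ᵥ (P *ᵥ (J (xb t + s • e i t) *ᵥ e i t))) s := by
        intro s
        have hcurve : HasDerivAt (fun s : ℝ => xb t + s • e i t) (e i t) s := by
          simpa using ((hasDerivAt_id s).smul_const (e i t)).const_add (xb t)
        have hfc : HasDerivAt (fun s : ℝ => f (xb t + s • e i t))
            (J (xb t + s • e i t) *ᵥ e i t) s := by
          have := (hf (xb t + s • e i t)).comp_hasDerivAt s hcurve
          exact this
        have h1 : HasDerivAt (fun s : ℝ => f (xb t + s • e i t) - f (xb t))
            (J (xb t + s • e i t) *ᵥ e i t) s := hfc.sub_const _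
        have hd1 := hasDerivAt_dot h1 (hasDerivAt_const s (P *ᵥ e i t))
        have hd2 := hasDerivAt_dot (hasDerivAt_const s (e i t)) (hasDerivAt_mulVec P h1)
        simp only [hφd0]
        have := hd1.add hd2
        refine this.congr_deriv ?_
        simp
      obtain ⟨c, hc, hceq⟩ := exists_hasDerivAt_eq_slope φ _ one_pos
        (fun s _ => (hφder s).continuousAt.continuousWithinAt) (fun s _ => hφder s)
      have hφ0 : φ 0 = 0 := by
        simp [hφd0]
      have hφ1 : φ 1 = (f (x i t) - f (xb t)) ⬝ᵥ (P *ᵥ e i t)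
          + e i t ⬝ᵥ (P *ᵥ (f (x i t) - f (xb t))) := by
        simp only [hφd0, one_smul]
        rw [hEi]
        norm_num
      have hbound : (J (xb t + c • e i t) *ᵥ e i t) ⬝ᵥ (P *ᵥ e i t)
          + e i t ⬝ᵥ (P *ᵥ (J (xb t + c • e i t) *ᵥ e i t)) ≤ θ * (yt i t ⬝ᵥ yt i t) := by
        set z := xb t + c • e i t with hz
        have hzX : z ∈ X := hseg c hc.1.le hc.2.le
        have t1 : e i t ⬝ᵥ (P *ᵥ (J z *ᵥ e i t)) = e i t ⬝ᵥ ((P * J z) *ᵥ e i t) := by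
          rw [Matrix.mulVec_mulVec]
        have t2 : (J z *ᵥ e i t) ⬝ᵥ (P *ᵥ e i t) = e i t ⬝ᵥ (((J z)ᵀ * P) *ᵥ e i t) := by
          rw [← Matrix.mulVec_mulVec, Matrix.dotProduct_mulVec (e i t) ((J z)ᵀ),
            Matrix.vecMul_transpose]
        have halg : (J z *ᵥ e i t) ⬝ᵥ (P *ᵥ e i t) + e i t ⬝ᵥ (P *ᵥ (J z *ᵥ e i t))
            = e i t ⬝ᵥ ((P * J z + (J z)ᵀ * P) *ᵥ e i t) := by
          rw [Matrix.add_mulVec, dotProduct_add, t1, t2]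
          ring
        rw [halg]
        have := hLMI z hzX (e i t)
        simpa only [hytd] using this
      have hμ : φ 1 - φ 0 = (J (xb t + c • e i t) *ᵥ e i t) ⬝ᵥ (P *ᵥ e i t)
          + e i t ⬝ᵥ (P *ᵥ (J (xb t + c • e i t) *ᵥ e i t)) := by
        rw [hceq]; norm_num
      rw [← hφ1]
      have : φ 1 = φ 1 - φ 0 := by rw [hφ0]; ring
      rw [this, hμ]
      exact hbound
    -- Step D : the coupling term
    have hPsymm : Pᵀ = P := by
      have := hP.1
      simpa [Matrix.IsHermitian] using this
    have hBP : Bᵀ * P = C := by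
      have h0 := congrArg Matrix.transpose hPB
      rw [Matrix.transpose_mul, Matrix.transpose_transpose, hPsymm] at h0
      exact h0
    have hD1 : ∀ (i : Fin N) (v : Fin p → ℝ), e i t ⬝ᵥ (P *ᵥ (B *ᵥ v)) = yt i t ⬝ᵥ v := by
      intro i v
      rw [Matrix.mulVec_mulVec, hPB, Matrix.dotProduct_mulVec, Matrix.vecMul_transpose]
    have hD2 : ∀ (i : Fin N) (v : Fin p → ℝ), (B *ᵥ v) ⬝ᵥ (P *ᵥ e i t) = yt i t ⬝ᵥ v := by
      intro i v
      rw [dotProduct_comm, Matrix.dotProduct_mulVec]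
      have hvm := Matrix.vecMul_transpose (A := Bᵀ) (x := P *ᵥ e i t)
      rw [Matrix.transpose_transpose] at hvm
      rw [hvm, Matrix.mulVec_mulVec, hBP, dotProduct_comm]
    have hu_sum : ∀ i, yt i t ⬝ᵥ w i = ∑ j, k i j t * (yt i t ⬝ᵥ (yt j t - yt i t)) := by
      intro i
      simp only [hwdef]
      rw [dotProduct_sum']
      refine Finset.sum_congr rfl fun j _ => ?_
      rw [dotProduct_smul]
      simp [smul_eq_mul]
    have hcoup : (∑ i, ((B *ᵥ w i) ⬝ᵥ (P *ᵥ e i t) + e i t ⬝ᵥ (P *ᵥ (B *ᵥ w i))))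
        = - ∑ i, ∑ j, k i j t * ((yt i t - yt j t) ⬝ᵥ (yt i t - yt j t)) := by
      have h1 : (∑ i, ((B *ᵥ w i) ⬝ᵥ (P *ᵥ e i t) + e i t ⬝ᵥ (P *ᵥ (B *ᵥ w i))))
          = ∑ i, ∑ j, 2 * (k i j t * (yt i t ⬝ᵥ (yt j t - yt i t))) := by
        refine Finset.sum_congr rfl fun i _ => ?_
        rw [hD1, hD2, hu_sum i, ← Finset.sum_add_distrib]
        exact Finset.sum_congr rfl fun j _ => by ring
      rw [h1]
      have hswap : ∑ i, ∑ j, k i j t * (yt j t ⬝ᵥ yt j t)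
          = ∑ i, ∑ j, k i j t * (yt i t ⬝ᵥ yt i t) := by
        rw [Finset.sum_comm]
        exact Finset.sum_congr rfl fun i _ => Finset.sum_congr rfl fun j _ => by
          rw [hksym j i t]
      have hpt : ∀ i j, 2 * (k i j t * (yt i t ⬝ᵥ (yt j t - yt i t)))
          = -(k i j t * ((yt i t - yt j t) ⬝ᵥ (yt i t - yt j t)))
            + (k i j t * (yt j t ⬝ᵥ yt j t) - k i j t * (yt i t ⬝ᵥ yt i t)) := by
        intro i j
        have hexp : (yt i t - yt j t) ⬝ᵥ (yt i t - yt j t)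
            = yt i t ⬝ᵥ yt i t - 2 * (yt i t ⬝ᵥ yt j t) + yt j t ⬝ᵥ yt j t := by
          rw [sub_dotProduct, dotProduct_sub, dotProduct_sub,
            dotProduct_comm (yt j t) (yt i t)]
          ring
        rw [hexp, dotProduct_sub]
        ring
      calc ∑ i, ∑ j, 2 * (k i j t * (yt i t ⬝ᵥ (yt j t - yt i t)))
          = ∑ i, ((∑ j, -(k i j t * ((yt i t - yt j t) ⬝ᵥ (yt i t - yt j t))))
              + ((∑ j, k i j t * (yt j t ⬝ᵥ yt j t)) - ∑ j, k i j t * (yt i t ⬝ᵥ yt i t))) := by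
            refine Finset.sum_congr rfl fun i _ => ?_
            rw [← Finset.sum_sub_distrib, ← Finset.sum_add_distrib]
            exact Finset.sum_congr rfl fun j _ => hpt i j
        _ = (∑ i, ∑ j, -(k i j t * ((yt i t - yt j t) ⬝ᵥ (yt i t - yt j t))))
              + ((∑ i, ∑ j, k i j t * (yt j t ⬝ᵥ yt j t))
                - ∑ i, ∑ j, k i j t * (yt i t ⬝ᵥ yt i t)) := by
            rw [Finset.sum_add_distrib, Finset.sum_sub_distrib]
        _ = - ∑ i, ∑ j, k i j t * ((yt i t - yt j t) ⬝ᵥ (yt i t - yt j t)) := by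
            rw [hswap]
            simp [Finset.sum_neg_distrib]
    -- Step E : combine with the adaptive term
    have hWsum : ∑ i, ∑ j, W i j t
        = ∑ i, ∑ j, ((if G.Adj i j then k i j t - κ else 0)
            * ((yt i t - yt j t) ⬝ᵥ (yt i t - yt j t))) := by
      refine Finset.sum_congr rfl fun i _ => Finset.sum_congr rfl fun j _ => ?_
      simp only [hWd0]
      by_cases h : G.Adj i j
      · rw [if_pos h, if_pos h, hYdiff i j t]
      · rw [if_neg h, if_neg h, zero_mul]
    have hcomb : (- ∑ i, ∑ j, k i j t * ((yt i t - yt j t) ⬝ᵥ (yt i t - yt j t)))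
          + ∑ i, ∑ j, W i j t
        = -κ * ∑ i, ∑ j, (if G.Adj i j then ((yt i t - yt j t) ⬝ᵥ (yt i t - yt j t)) else 0) := by
      rw [hWsum]
      have hneg : (- ∑ i, ∑ j, k i j t * ((yt i t - yt j t) ⬝ᵥ (yt i t - yt j t)))
          = ∑ i, ∑ j, -(k i j t * ((yt i t - yt j t) ⬝ᵥ (yt i t - yt j t))) := by
        simp [Finset.sum_neg_distrib]
      rw [hneg, ← Finset.sum_add_distrib]
      have hmul : -κ * ∑ i, ∑ j, (if G.Adj i j then ((yt i t - yt j t) ⬝ᵥ (yt i t - yt j t)) else 0)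
          = ∑ i, ∑ j, -κ * (if G.Adj i j then ((yt i t - yt j t) ⬝ᵥ (yt i t - yt j t)) else 0) := by
        rw [Finset.mul_sum]
        exact Finset.sum_congr rfl fun i _ => by rw [Finset.mul_sum]
      rw [hmul]
      refine Finset.sum_congr rfl fun i _ => ?_
      rw [← Finset.sum_add_distrib]
      refine Finset.sum_congr rfl fun j _ => ?_
      by_cases h : G.Adj i j
      · rw [if_pos h, if_pos h]
        ring
      · rw [if_neg h, if_neg h, hknonadj i j h t]
        ring
    -- Step F : spectral gap
    have hgap' : lam * g t ≤ ∑ i, ∑ j,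
        (if G.Adj i j then ((yt i t - yt j t) ⬝ᵥ (yt i t - yt j t)) else 0) := by
      have := hgap (fun i => yt i t) (hysum t)
      simpa [hgd0] using this
    have hκlam : κ * lam = θ + 1 := by
      rw [hκ]
      field_simp
    have hgt0 : 0 ≤ g t := by
      simp only [hgd0]
      exact Finset.sum_nonneg fun i _ => dot_self_nonneg' _
    have hgapterm : -κ * ∑ i, ∑ j,
        (if G.Adj i j then ((yt i t - yt j t) ⬝ᵥ (yt i t - yt j t)) else 0) ≤ -(θ + 1) * g t := by
      nlinarith [mul_le_mul_of_nonneg_left hgap' hκpos.le]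
    have hfbound : ∑ i, ((f (x i t) - f (xb t)) ⬝ᵥ (P *ᵥ e i t)
        + e i t ⬝ᵥ (P *ᵥ (f (x i t) - f (xb t)))) ≤ θ * g t := by
      simp only [hgd0]
      rw [Finset.mul_sum]
      exact Finset.sum_le_sum fun i _ => hf_part i
    -- assemble
    simp only [hV'd0]
    rw [hstate, hsplit]
    have hsum2 : (∑ i, ((B *ᵥ w i) ⬝ᵥ (P *ᵥ e i t) + e i t ⬝ᵥ (P *ᵥ (B *ᵥ w i))))
        + ∑ i, ∑ j, W i j t ≤ -(θ + 1) * g t := by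
      rw [hcoup]
      calc (- ∑ i, ∑ j, k i j t * ((yt i t - yt j t) ⬝ᵥ (yt i t - yt j t)))
            + ∑ i, ∑ j, W i j t
          = -κ * ∑ i, ∑ j, (if G.Adj i j then ((yt i t - yt j t) ⬝ᵥ (yt i t - yt j t)) else 0) :=
            hcomb
        _ ≤ -(θ + 1) * g t := hgapterm
    linarith
  -- ## boundedness of the derivative of g
  obtain ⟨M, hM⟩ := hbdd
  have i0 : Fin N := ⟨0, hNpos⟩
  have hM0 : 0 ≤ M := le_trans (norm_nonneg _) ((hM 0 le_rfl).1 i0)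
  have hfcont : Continuous f :=
    continuous_iff_continuousAt.2 fun z => (hf z).differentiableAt.continuousAt
  obtain ⟨Mf0, hMf0⟩ := (isCompact_closedBall (0 : Fin n → ℝ) M).exists_bound_of_continuousOn
    hfcont.continuousOn
  set Mf := max Mf0 0 with hMfd
  have hMfnn : 0 ≤ Mf := le_max_right _ _
  have hMfb : ∀ z : Fin n → ℝ, ‖z‖ ≤ M → ‖f z‖ ≤ Mf := fun z hz =>
    le_trans (hMf0 z (by simpa [Metric.mem_closedBall, dist_zero_right] using hz))
      (le_max_left _ _)
  set cC := ‖C.mulVecLin.toContinuousLinearMap‖ with hcCd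
  set cB := ‖B.mulVecLin.toContinuousLinearMap‖ with hcBd
  have hcC0 : 0 ≤ cC := norm_nonneg _
  have hcB0 : 0 ≤ cB := norm_nonneg _
  set D : ℝ := Mf + cB * (N * (M * (cC * M + cC * M))) with hDd
  have hD0 : 0 ≤ D := by
    rw [hDd]
    have : (0:ℝ) ≤ cC * M := mul_nonneg hcC0 hM0
    have h4 : (0:ℝ) ≤ M * (cC * M + cC * M) := mul_nonneg hM0 (by linarith)
    have h5 : (0:ℝ) ≤ (N:ℝ) * (M * (cC * M + cC * M)) := mul_nonneg (Nat.cast_nonneg N) h4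
    exact add_nonneg hMfnn (mul_nonneg hcB0 h5)
  set L0 : ℝ := N * ((p * (cC * (2*D)) * (cC * (2*M))) + (p * (cC * (2*M)) * (cC * (2*D)))) with hL0d
  set gp : ℝ → ℝ := fun t => ∑ i, ((C *ᵥ de i t) ⬝ᵥ yt i t + yt i t ⬝ᵥ (C *ᵥ de i t)) with hgpd
  have hgderiv : ∀ t, 0 ≤ t → HasDerivAt g (gp t) t := by
    intro t ht
    simp only [hgd0, hgpd]
    refine HasDerivAt.fun_sum fun i _ => ?_
    have hyD : HasDerivAt (yt i) (C *ᵥ de i t) t := by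
      simp only [hytd]
      exact hasDerivAt_mulVec C (hdE i t ht)
    exact hasDerivAt_dot hyD hyD
  -- pointwise bounds for t ≥ 0
  have hbnds : ∀ t, 0 ≤ t → ∀ i, ‖e i t‖ ≤ 2*M ∧ ‖yt i t‖ ≤ cC * (2*M) ∧ ‖de i t‖ ≤ 2*D := by
    intro t ht
    have hxbM : ‖xb t‖ ≤ M := by
      simp only [hxbd]
      rw [norm_smul, Real.norm_eq_abs, abs_of_nonneg (by positivity)]
      have h1 : ‖∑ j, x j t‖ ≤ (N:ℝ) * M := by
        refine le_trans (norm_sum_le _ _) ?_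
        calc (∑ j, ‖x j t‖) ≤ ∑ _j : Fin N, M := Finset.sum_le_sum fun j _ => (hM t ht).1 j
          _ = N * M := by simp [Finset.card_univ]
      calc (N:ℝ)⁻¹ * ‖∑ j, x j t‖ ≤ (N:ℝ)⁻¹ * ((N:ℝ) * M) := by
            exact mul_le_mul_of_nonneg_left h1 (by positivity)
        _ = M := by field_simp
    have heM : ∀ i, ‖e i t‖ ≤ 2*M := by
      intro i
      simp only [hed]
      calc ‖x i t - xb t‖ ≤ ‖x i t‖ + ‖xb t‖ := norm_sub_le _ _
        _ ≤ M + M := add_le_add ((hM t ht).1 i) hxbM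
        _ = 2*M := by ring
    have hCx : ∀ i, ‖C *ᵥ x i t‖ ≤ cC * M := fun i =>
      le_trans (norm_mulVec_le C _) (mul_le_mul_of_nonneg_left ((hM t ht).1 i) hcC0)
    have hdM : ∀ i, ‖d i t‖ ≤ D := by
      intro i
      simp only [hdd]
      have h4 : ‖∑ j, k i j t • (C *ᵥ x j t - C *ᵥ x i t)‖
          ≤ (N:ℝ) * (M * (cC * M + cC * M)) := by
        refine le_trans (norm_sum_le _ _) ?_
        calc (∑ j, ‖k i j t • (C *ᵥ x j t - C *ᵥ x i t)‖)
            ≤ ∑ _j : Fin N, M * (cC * M + cC * M) := by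
              refine Finset.sum_le_sum fun j _ => ?_
              rw [norm_smul, Real.norm_eq_abs]
              exact mul_le_mul ((hM t ht).2 i j)
                (le_trans (norm_sub_le _ _) (add_le_add (hCx j) (hCx i)))
                (norm_nonneg _) hM0
          _ = (N:ℝ) * (M * (cC * M + cC * M)) := by simp [Finset.card_univ]
      calc ‖f (x i t) + B *ᵥ (∑ j, k i j t • (C *ᵥ x j t - C *ᵥ x i t))‖
          ≤ ‖f (x i t)‖ + ‖B *ᵥ (∑ j, k i j t • (C *ᵥ x j t - C *ᵥ x i t))‖ := norm_add_le _ _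
        _ ≤ Mf + cB * ((N:ℝ) * (M * (cC * M + cC * M))) :=
            add_le_add (hMfb _ ((hM t ht).1 i))
              (le_trans (norm_mulVec_le B _) (mul_le_mul_of_nonneg_left h4 hcB0))
        _ = D := by rw [hDd]
    have hdeM : ∀ i, ‖de i t‖ ≤ 2*D := by
      intro i
      simp only [hded]
      have h5 : ‖(N:ℝ)⁻¹ • ∑ j, d j t‖ ≤ D := by
        rw [norm_smul, Real.norm_eq_abs, abs_of_nonneg (by positivity)]
        have h6 : ‖∑ j, d j t‖ ≤ (N:ℝ) * D := by
          refine le_trans (norm_sum_le _ _) ?_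
          calc (∑ j, ‖d j t‖) ≤ ∑ _j : Fin N, D := Finset.sum_le_sum fun j _ => hdM j
            _ = N * D := by simp [Finset.card_univ]
        calc (N:ℝ)⁻¹ * ‖∑ j, d j t‖ ≤ (N:ℝ)⁻¹ * ((N:ℝ) * D) :=
              mul_le_mul_of_nonneg_left h6 (by positivity)
          _ = D := by field_simp
      calc ‖d i t - (N:ℝ)⁻¹ • ∑ j, d j t‖ ≤ ‖d i t‖ + ‖(N:ℝ)⁻¹ • ∑ j, d j t‖ := norm_sub_le _ _
        _ ≤ D + D := add_le_add (hdM i) h5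
        _ = 2*D := by ring
    intro i
    refine ⟨heM i, ?_, hdeM i⟩
    simp only [hytd]
    exact le_trans (norm_mulVec_le C _) (mul_le_mul_of_nonneg_left (heM i) hcC0)
  have hgpB : ∀ t, 0 ≤ t → |gp t| ≤ L0 := by
    intro t ht
    have hpnn : (0:ℝ) ≤ (p:ℝ) := Nat.cast_nonneg p
    have hA0 : (0:ℝ) ≤ cC * (2*D) := mul_nonneg hcC0 (by linarith)
    have hB0 : (0:ℝ) ≤ cC * (2*M) := mul_nonneg hcC0 (by linarith)
    simp only [hgpd]
    refine le_trans (Finset.abs_sum_le_sum_abs _ _) ?_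
    have hterm : ∀ i : Fin N, |(C *ᵥ de i t) ⬝ᵥ yt i t + yt i t ⬝ᵥ (C *ᵥ de i t)|
        ≤ (p * (cC * (2*D)) * (cC * (2*M))) + (p * (cC * (2*M)) * (cC * (2*D))) := by
      intro i
      obtain ⟨hE, hY, hDE⟩ := hbnds t ht i
      have hCde : ‖C *ᵥ de i t‖ ≤ cC * (2*D) :=
        le_trans (norm_mulVec_le C _) (mul_le_mul_of_nonneg_left hDE hcC0)
      have b1 : |(C *ᵥ de i t) ⬝ᵥ yt i t| ≤ p * (cC * (2*D)) * (cC * (2*M)) := by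
        refine le_trans (abs_dot_le _ _) ?_
        exact mul_le_mul (mul_le_mul_of_nonneg_left hCde hpnn) hY (norm_nonneg _)
          (mul_nonneg hpnn hA0)
      have b2 : |yt i t ⬝ᵥ (C *ᵥ de i t)| ≤ p * (cC * (2*M)) * (cC * (2*D)) := by
        refine le_trans (abs_dot_le _ _) ?_
        exact mul_le_mul (mul_le_mul_of_nonneg_left hY hpnn) hCde (norm_nonneg _)
          (mul_nonneg hpnn hB0)
      calc |(C *ᵥ de i t) ⬝ᵥ yt i t + yt i t ⬝ᵥ (C *ᵥ de i t)|
          ≤ |(C *ᵥ de i t) ⬝ᵥ yt i t| + |yt i t ⬝ᵥ (C *ᵥ de i t)| := abs_add_le _ _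
        _ ≤ _ := add_le_add b1 b2
    calc (∑ i, |(C *ᵥ de i t) ⬝ᵥ yt i t + yt i t ⬝ᵥ (C *ᵥ de i t)|)
        ≤ ∑ _i : Fin N, ((p * (cC * (2*D)) * (cC * (2*M))) + (p * (cC * (2*M)) * (cC * (2*D)))) :=
          Finset.sum_le_sum fun i _ => hterm i
      _ = L0 := by rw [hL0d]; simp [Finset.card_univ]; ring
  set L : ℝ := L0 + 1 with hLd
  have hL00 : 0 ≤ L0 := le_trans (abs_nonneg _) (hgpB 0 le_rfl)
  have hLpos : 0 < L := by rw [hLd]; linarith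
  -- Lipschitz bound for g on [0, ∞)
  have hglip : ∀ u v : ℝ, 0 ≤ u → 0 ≤ v → |g v - g u| ≤ L * |v - u| := by
    intro u v hu hv
    have hbd : ∀ z ∈ Set.Ici (0:ℝ), ‖gp z‖ ≤ L := by
      intro z hz
      rw [Real.norm_eq_abs]
      have := hgpB z hz
      rw [hLd]; linarith
    have := Convex.norm_image_sub_le_of_norm_hasDerivWithin_le
      (f := g) (f' := gp) (s := Set.Ici (0:ℝ)) (x := u) (y := v)
      (fun z hz => (hgderiv z hz).hasDerivWithinAt) hbd (convex_Ici 0) hu hv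
    simpa [Real.norm_eq_abs] using this
  -- extension of g to all of ℝ
  set gt : ℝ → ℝ := fun t => g (max t 0) with hgtd
  have hgt0 : ∀ t, 0 ≤ gt t := by
    intro t
    simp only [hgtd, hgd0]
    exact Finset.sum_nonneg fun i _ => dot_self_nonneg' _
  have hgteq : ∀ t, 0 ≤ t → gt t = g t := by
    intro t ht
    simp only [hgtd, max_eq_left ht]
  have hgtcont : Continuous gt := by
    rw [continuous_iff_continuousAt]
    intro t
    have h1 : ContinuousAt g (max t 0) := (hgderiv _ (le_max_right _ _)).continuousAt
    have h2 : ContinuousAt (fun s : ℝ => max s 0) t :=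
      (continuous_id.max continuous_const).continuousAt
    have h3 := ContinuousAt.comp (g := g) (f := fun s : ℝ => max s 0) (x := t) h1 h2
    exact h3
  have hgtlip : ∀ s t : ℝ, |gt t - gt s| ≤ L * |t - s| := by
    intro s t
    simp only [hgtd]
    refine le_trans (hglip (max s 0) (max t 0) (le_max_right _ _) (le_max_right _ _)) ?_
    exact mul_le_mul_of_nonneg_left (abs_max_sub_max_le_abs t s 0) hLpos.le
  -- integral bound via the antitone Lyapunov-type function
  set F : ℝ → ℝ := fun t => ∫ s in (0:ℝ)..t, gt s with hFd0
  have hFderiv : ∀ t : ℝ, HasDerivAt F (gt t) t := by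
    intro t
    simp only [hFd0]
    exact intervalIntegral.integral_hasDerivAt_right (hgtcont.intervalIntegrable _ _)
      (hgtcont.stronglyMeasurableAtFilter _ _) hgtcont.continuousAt
  have hanti : AntitoneOn (fun t => V t + F t) (Set.Ici (0:ℝ)) := by
    apply antitoneOn_of_deriv_nonpos (convex_Ici 0)
    · exact fun z hz => ((hVderiv z hz).add (hFderiv z)).continuousAt.continuousWithinAt
    · intro z hz
      rw [interior_Ici] at hz
      exact ((hVderiv z hz.le).add (hFderiv z)).differentiableAt.differentiableWithinAt
    · intro z hz
      rw [interior_Ici] at hz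
      rw [HasDerivAt.deriv ((hVderiv z hz.le).fun_add (hFderiv z))]
      have h1 := hV'le z hz.le
      have h2 := hgteq z hz.le
      linarith
  have hFA : ∀ t, 0 ≤ t → F t ≤ V 0 := by
    intro t ht
    have h1 : V t + F t ≤ V 0 + F 0 :=
      hanti Set.self_mem_Ici (by exact ht) ht
    have hF0 : F 0 = 0 := by simp only [hFd0]; exact intervalIntegral.integral_same
    have h2 := hVnn t
    linarith
  -- Barbalat's lemma
  have hten : Tendsto gt atTop (𝓝 0) := by
    refine barbalat hLpos hgt0 hgtcont hgtlip (A := V 0) ?_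
    intro t ht
    exact hFA t ht
  -- conclusion
  intro i
  have hren : (fun t => C *ᵥ (x i t - (N : ℝ)⁻¹ • ∑ j, x j t)) = fun t => yt i t := by
    funext t
    simp only [hytd, hed, hxbd]
  rw [hren]
  have hsqr : Tendsto (fun t => Real.sqrt (gt t)) atTop (𝓝 0) := by
    have h1 : Tendsto Real.sqrt (𝓝 0) (𝓝 (Real.sqrt 0)) :=
      Real.continuous_sqrt.continuousAt
    have := h1.comp hten
    simpa [Real.sqrt_zero, Function.comp_def] using this
  refine squeeze_zero_norm' ?_ hsqr
  filter_upwards [eventually_ge_atTop (0:ℝ)] with t ht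
  have h2 : ‖yt i t‖^2 ≤ gt t := by
    refine le_trans (norm_sq_le_dot _) ?_
    rw [hgteq t ht]
    simp only [hgd0]
    exact Finset.single_le_sum (f := fun j => yt j t ⬝ᵥ yt j t)
      (fun j _ => dot_self_nonneg' _) (Finset.mem_univ i)
  calc ‖yt i t‖ = Real.sqrt (‖yt i t‖^2) := (Real.sqrt_sq (norm_nonneg _)).symm
    _ ≤ Real.sqrt (gt t) := Real.sqrt_le_sqrt h2
end

section
/- Let G^{(1)},…,G^{(m)} be undirected connected graphs on nodes 1,…,N, let f : ℝⁿ → ℝⁿ be continuously differentiable, and for q = 1,…,m let B^{(q)} ∈ ℝ^{n×p_q} and C^{(q)} ∈ ℝ^{p_q×n}. Suppose there exist a convex set X ⊆ ℝⁿ, θ > 0, a symmetric positive definite P ∈ ℝ^{n×n}, and constants ω^{(q)} > 0 such that P·J(x) + J(x)ᵀ·P ⪯ θ·CᵀC for all x ∈ X with C^T = [C^{(1)T} ⋯ C^{(m)T}], and P·B^{(q)} = ω^{(q)}·C^{(q)T} for each q. Let xᵢ : [0,∞) → ℝⁿ and k^{(q)}ᵢⱼ : [0,∞) → ℝ be continuously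 differentiable functions solving the multi-channel adaptively coupled system. If all xᵢ(t) and k^{(q)}ᵢⱼ(t) are bounded on [0,∞) and xᵢ(t) ∈ X for all t ≥ 0 and all i, then for each q and each i, ỹᵢ^{(q)}(t) := C^{(q)}(xᵢ(t) − x̄(t)) → 0 as t → ∞, where x̄(t) = (1/N)∑_{i=1}^N xᵢ(t). -/
open Matrix Filter Topology

lemma incr_lower {k φ : ℝ → ℝ} {a b m : ℝ} (ha : 0 ≤ a) (hab : a ≤ b)
    (hk : ∀ t, 0 ≤ t → HasDerivAt k (φ t) t)
    (hm : ∀ s ∈ Set.Icc a b, m ≤ φ s) :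
    m * (b - a) ≤ k b - k a := by
  set h : ℝ → ℝ := fun s => k s - m * s with hh
  have hmem : ∀ s ∈ Set.Icc a b, (0:ℝ) ≤ s := fun s hs => ha.trans hs.1
  have hd : ∀ s ∈ Set.Icc a b, HasDerivAt h (φ s - m) s := by
    intro s hs
    have h2 : HasDerivAt (fun y : ℝ => m * y) (m * 1) s := (hasDerivAt_id s).const_mul m
    rw [mul_one] at h2
    exact (hk s (hmem s hs)).sub h2
  have hmono : MonotoneOn h (Set.Icc a b) := by
    apply monotoneOn_of_deriv_nonneg (convex_Icc a b)
    · exact fun s hs => (hd s hs).continuousAt.continuousWithinAt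
    · exact fun s hs => ((hd s (interior_subset hs)).differentiableAt).differentiableWithinAt
    · intro s hs
      rw [(hd s (interior_subset hs)).deriv]
      have := hm s (interior_subset hs)
      linarith
  have := hmono (Set.left_mem_Icc.2 hab) (Set.right_mem_Icc.2 hab) hab
  simp only [hh] at this
  linarith

lemma barbalat_s1 {g k : ℝ → ℝ} {γ K M : ℝ} (hγ : 0 < γ)
    (hk : ∀ t, 0 ≤ t → HasDerivAt k (γ * g t) t)
    (hg0 : ∀ t, 0 ≤ t → 0 ≤ g t)
    (hlip : ∀ s t, 0 ≤ s → 0 ≤ t → |g s - g t| ≤ K * |s - t|)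
    (hkM : ∀ t, 0 ≤ t → k t ≤ M) :
    Tendsto g atTop (𝓝 0) := by
  have hmono : ∀ s t, 0 ≤ s → s ≤ t → k s ≤ k t := by
    intro s t hs hst
    have h0 := incr_lower hs hst hk
      (fun u hu => mul_nonneg hγ.le (hg0 u (hs.trans hu.1)))
    have : (0:ℝ) * (t - s) ≤ k t - k s := by
      refine le_trans (le_of_eq ?_) h0
      ring
    linarith
  have hsup : ∀ ε > (0:ℝ), ∃ T, 0 ≤ T ∧ ∀ s t, T ≤ s → s ≤ t → k t - k s < ε := by
    intro ε hε
    set S := k '' Set.Ici (0:ℝ) with hS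
    have hne : S.Nonempty := ⟨k 0, ⟨0, Set.self_mem_Ici, rfl⟩⟩
    have hbdd : BddAbove S := ⟨M, by rintro y ⟨u, hu, rfl⟩; exact hkM u hu⟩
    obtain ⟨y, hyS, hy⟩ := exists_lt_of_lt_csSup hne (show sSup S - ε < sSup S by linarith)
    obtain ⟨T, hT0, rfl⟩ := hyS
    refine ⟨max T 0, le_max_right _ _, fun s t hs hst => ?_⟩
    have hs0 : (0:ℝ) ≤ s := le_trans (le_max_right _ _) hs
    have h1 : k t ≤ sSup S := le_csSup hbdd ⟨t, hs0.trans hst, rfl⟩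
    have h2 : k T ≤ k s := hmono T s hT0 (le_trans (le_max_left _ _) hs)
    linarith
  rw [Metric.tendsto_atTop]
  intro ε hε
  set K' := max K 1 with hK'def
  have hK' : (0:ℝ) < K' := lt_of_lt_of_le one_pos (le_max_right _ _)
  set δ := ε / (2 * K') with hδdef
  have hδ : 0 < δ := by positivity
  have hK'δ : K' * δ = ε / 2 := by
    rw [hδdef]; field_simp
  obtain ⟨T, hT0, hT⟩ := hsup (γ * (ε/2) * δ) (by positivity)
  refine ⟨max T 0, fun t ht => ?_⟩
  have ht0 : (0:ℝ) ≤ t := le_trans (le_max_right _ _) ht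
  have htT : T ≤ t := le_trans (le_max_left _ _) ht
  rw [Real.dist_eq, sub_zero, abs_of_nonneg (hg0 t ht0)]
  by_contra hcon
  push_neg at hcon
  have hglb : ∀ s ∈ Set.Icc t (t + δ), ε/2 ≤ g s := by
    intro s hs
    have hs0 : (0:ℝ) ≤ s := ht0.trans hs.1
    have h1 : |g t - g s| ≤ K * |t - s| := hlip t s ht0 hs0
    have h2 : |t - s| ≤ δ := by
      rw [abs_sub_comm, abs_of_nonneg (by linarith [hs.1])]
      linarith [hs.2]
    have h3 : K * |t - s| ≤ K' * δ :=
      mul_le_mul (le_max_left _ _) h2 (abs_nonneg _) hK'.le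
    have h4 : g t - g s ≤ ε / 2 := by
      calc g t - g s ≤ |g t - g s| := le_abs_self _
        _ ≤ K' * δ := h1.trans h3
        _ = ε / 2 := hK'δ
    linarith
  have hlow := incr_lower ht0 (by linarith : t ≤ t + δ) hk
    (fun s hs => mul_le_mul_of_nonneg_left (hglb s hs) hγ.le)
  have hup := hT t (t + δ) htT (by linarith)
  have heq : γ * (ε/2) * (t + δ - t) = γ * (ε/2) * δ := by ring
  nlinarith [hlow, hup]


/-- Multi-channel adaptive synchronization: with `m` input-output channels
`(B⁽q⁾, C⁽q⁾)` coupled over possibly different connected graphs `G⁽q⁾`, under the relaxed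
Assumption (OFP) with multipliers `ω⁽q⁾ > 0`, bounded solutions of the multi-channel
adaptively coupled system remaining in `X` satisfy `ỹᵢ⁽q⁾(t) = C⁽q⁾ (xᵢ(t) - x̄(t)) → 0`. -/
theorem adaptive_ode_synchronization_multichannel
    {n N m : ℕ} {p : Fin m → ℕ}
    -- the undirected connected interconnection graphs, one per channel
    (G : Fin m → SimpleGraph (Fin N)) (hG : ∀ q, (G q).Connected)
    -- the continuously differentiable vector field `f`, with Jacobian `J`
    (f : (Fin n → ℝ) → (Fin n → ℝ))
    (J : (Fin n → ℝ) → Matrix (Fin n) (Fin n) ℝ)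
    (hf : ∀ z, HasFDerivAt f ((J z).mulVecLin.toContinuousLinearMap) z)
    (hJcont : Continuous J)
    -- input and output matrices for each channel
    (B : ∀ q : Fin m, Matrix (Fin n) (Fin (p q)) ℝ)
    (C : ∀ q : Fin m, Matrix (Fin (p q)) (Fin n) ℝ)
    -- Assumption (OFP), relaxed with multipliers ω⁽q⁾ > 0; note that for the stacked
    -- matrix C we have vᵀCᵀCv = ∑_q |C⁽q⁾ v|²
    (X : Set (Fin n → ℝ)) (hX : Convex ℝ X)
    (θ : ℝ) (hθ : 0 < θ)
    (P : Matrix (Fin n) (Fin n) ℝ) (hP : P.PosDef)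
    (ω : Fin m → ℝ) (hω : ∀ q, 0 < ω q)
    (hLMI : ∀ z ∈ X, ∀ v : Fin n → ℝ,
      v ⬝ᵥ ((P * J z + (J z)ᵀ * P) *ᵥ v) ≤ θ * ∑ q, ((C q *ᵥ v) ⬝ᵥ (C q *ᵥ v)))
    (hPB : ∀ q, P * B q = ω q • (C q)ᵀ)
    -- a continuously differentiable solution of the multi-channel adaptively coupled system
    (x : Fin N → ℝ → (Fin n → ℝ)) (k : Fin m → Fin N → Fin N → ℝ → ℝ)
    (γ : Fin m → Fin N → Fin N → ℝ)
    (hγsym : ∀ q i j, γ q i j = γ q j i)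
    (hγpos : ∀ q i j, (G q).Adj i j → 0 < γ q i j)
    (hksym : ∀ q i j t, k q i j t = k q j i t)
    (hknonadj : ∀ q i j, ¬ (G q).Adj i j → ∀ t, k q i j t = 0)
    (hxode : ∀ i, ∀ t, 0 ≤ t →
      HasDerivAt (x i)
        (f (x i t) + ∑ q, B q *ᵥ (∑ j, k q i j t • (C q *ᵥ x j t - C q *ᵥ x i t))) t)
    (hkode : ∀ q i j, (G q).Adj i j → ∀ t, 0 ≤ t →
      HasDerivAt (k q i j)
        (γ q i j * ((C q *ᵥ x i t - C q *ᵥ x j t) ⬝ᵥ (C q *ᵥ x i t - C q *ᵥ x j t))) t)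
    -- boundedness of the solutions on `[0,∞)`
    (hbdd : ∃ M : ℝ, ∀ t, 0 ≤ t → (∀ i, ‖x i t‖ ≤ M) ∧ (∀ q i j, |k q i j t| ≤ M))
    -- the states remain in `X`
    (hXinv : ∀ i, ∀ t, 0 ≤ t → x i t ∈ X) :
    -- conclusion: each channel's outputs synchronize
    ∀ q i, Tendsto (fun t => C q *ᵥ (x i t - (N : ℝ)⁻¹ • ∑ j, x j t)) atTop (𝓝 0) := by
  -- bounds
  obtain ⟨M0, hM0⟩ := hbdd
  set M : ℝ := max M0 0 with hMdef
  have hMnn : (0:ℝ) ≤ M := le_max_right _ _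
  have hxM : ∀ t, 0 ≤ t → ∀ a, ‖x a t‖ ≤ M :=
    fun t ht a => ((hM0 t ht).1 a).trans (le_max_left _ _)
  have hkM : ∀ q' a b t, 0 ≤ t → |k q' a b t| ≤ M :=
    fun q' a b t ht => ((hM0 t ht).2 q' a b).trans (le_max_left _ _)
  have hfc : Continuous f := by
    rw [continuous_iff_continuousAt]; exact fun z => (hf z).continuousAt
  obtain ⟨Mf, hMf⟩ := (isCompact_closedBall (0 : Fin n → ℝ) M).exists_bound_of_continuousOn
    hfc.continuousOn
  set cB : Fin m → ℝ := fun q' => ‖LinearMap.toContinuousLinearMap (B q').mulVecLin‖ with hcB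
  set cC : Fin m → ℝ := fun q' => ‖LinearMap.toContinuousLinearMap (C q').mulVecLin‖ with hcC
  have hcBnn : ∀ q', 0 ≤ cB q' := fun _ => norm_nonneg _
  have hcCnn : ∀ q', 0 ≤ cC q' := fun _ => norm_nonneg _
  have hmulB : ∀ (q' : Fin m) (w : Fin (p q') → ℝ), ‖B q' *ᵥ w‖ ≤ cB q' * ‖w‖ := by
    intro q' w
    simpa [Matrix.mulVecLin_apply] using
      (LinearMap.toContinuousLinearMap (B q').mulVecLin).le_opNorm w
  have hmulC : ∀ (q' : Fin m) (w : Fin n → ℝ), ‖C q' *ᵥ w‖ ≤ cC q' * ‖w‖ := by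
    intro q' w
    simpa [Matrix.mulVecLin_apply] using
      (LinearMap.toContinuousLinearMap (C q').mulVecLin).le_opNorm w
  -- velocities
  set v : Fin N → ℝ → (Fin n → ℝ) := fun a t =>
    f (x a t) + ∑ q', B q' *ᵥ (∑ j, k q' a j t • (C q' *ᵥ x j t - C q' *ᵥ x a t)) with hv
  have hxd : ∀ a t, 0 ≤ t → HasDerivAt (x a) (v a t) t := fun a t ht => hxode a t ht
  set L : ℝ := max (Mf + ∑ q', cB q' * ((N:ℝ) * (M * (cC q' * M + cC q' * M)))) 0 with hL
  have hvL : ∀ a t, 0 ≤ t → ‖v a t‖ ≤ L := by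
    intro a t ht
    refine le_trans ?_ (le_max_left _ _)
    refine le_trans (norm_add_le _ _) (add_le_add ?_ ?_)
    · exact hMf _ (by simpa [Metric.mem_closedBall, dist_eq_norm] using hxM t ht a)
    · refine le_trans (norm_sum_le _ _) (Finset.sum_le_sum fun q' _ => ?_)
      refine le_trans (hmulB q' _) ?_
      refine mul_le_mul_of_nonneg_left ?_ (hcBnn q')
      refine le_trans (norm_sum_le _ _) ?_
      have hterm : ∀ j : Fin N, ‖k q' a j t • (C q' *ᵥ x j t - C q' *ᵥ x a t)‖
          ≤ M * (cC q' * M + cC q' * M) := by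
        intro j
        rw [norm_smul, Real.norm_eq_abs]
        refine mul_le_mul (hkM q' a j t ht) ?_ (norm_nonneg _) hMnn
        refine le_trans (norm_sub_le _ _) (add_le_add ?_ ?_)
        · exact (hmulC q' _).trans (mul_le_mul_of_nonneg_left (hxM t ht j) (hcCnn q'))
        · exact (hmulC q' _).trans (mul_le_mul_of_nonneg_left (hxM t ht a) (hcCnn q'))
      calc ∑ j, ‖k q' a j t • (C q' *ᵥ x j t - C q' *ᵥ x a t)‖
          ≤ ∑ _j : Fin N, M * (cC q' * M + cC q' * M) :=
            Finset.sum_le_sum fun j _ => hterm j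
        _ = (N:ℝ) * (M * (cC q' * M + cC q' * M)) := by
            simp [Finset.sum_const, Finset.card_univ, nsmul_eq_mul]
  have hLnn : (0:ℝ) ≤ L := le_max_right _ _
  intro q i
  -- per-edge convergence
  have hedge : ∀ a b, (G q).Adj a b →
      Tendsto (fun t => C q *ᵥ (x a t - x b t)) atTop (𝓝 0) := by
    intro a b hadj
    set d : ℝ → Fin (p q) → ℝ := fun t => C q *ᵥ (x a t - x b t) with hd
    set e : ℝ → Fin (p q) → ℝ := fun t => C q *ᵥ (v a t - v b t) with he
    set g : ℝ → ℝ := fun t => ∑ l, d t l * d t l with hg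
    have hxc : ∀ c : Fin N, ∀ t, 0 ≤ t → ∀ r, HasDerivAt (fun t => x c t r) (v c t r) t :=
      fun c t ht r => hasDerivAt_pi.1 (hxd c t ht) r
    have hdeq : ∀ (l : Fin (p q)), (fun t => d t l) = fun t => ∑ r, C q l r * (x a t r - x b t r) := by
      intro l; funext t; simp [hd, Matrix.mulVec, dotProduct]
    have heeq : ∀ (l : Fin (p q)) (t : ℝ), e t l = ∑ r, C q l r * (v a t r - v b t r) := by
      intro l t; simp [he, Matrix.mulVec, dotProduct]
    have hdc : ∀ t, 0 ≤ t → ∀ l, HasDerivAt (fun t => d t l) (e t l) t := by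
      intro t ht l
      rw [hdeq l, heeq l t]
      exact HasDerivAt.fun_sum fun r _ => ((hxc a t ht r).sub (hxc b t ht r)).const_mul (C q l r)
    have hgd : ∀ t, 0 ≤ t →
        HasDerivAt g (∑ l, (e t l * d t l + d t l * e t l)) t := by
      intro t ht
      rw [hg]
      exact HasDerivAt.fun_sum fun l _ => (hdc t ht l).mul (hdc t ht l)
    have hdb : ∀ t, 0 ≤ t → ‖d t‖ ≤ cC q * (M + M) := by
      intro t ht
      refine (hmulC q _).trans (mul_le_mul_of_nonneg_left ?_ (hcCnn q))
      exact (norm_sub_le _ _).trans (add_le_add (hxM t ht a) (hxM t ht b))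
    have heb : ∀ t, 0 ≤ t → ‖e t‖ ≤ cC q * (L + L) := by
      intro t ht
      refine (hmulC q _).trans (mul_le_mul_of_nonneg_left ?_ (hcCnn q))
      exact (norm_sub_le _ _).trans (add_le_add (hvL a t ht) (hvL b t ht))
    set K : ℝ := (p q : ℝ) * (2 * (cC q * (L + L)) * (cC q * (M + M))) with hK
    have hgdb : ∀ t, 0 ≤ t → ‖∑ l, (e t l * d t l + d t l * e t l)‖ ≤ K := by
      intro t ht
      rw [Real.norm_eq_abs]
      refine le_trans (Finset.abs_sum_le_sum_abs _ _) ?_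
      have hterm : ∀ l : Fin (p q),
          |e t l * d t l + d t l * e t l| ≤ 2 * (cC q * (L + L)) * (cC q * (M + M)) := by
        intro l
        have h1 : |e t l| ≤ cC q * (L + L) :=
          le_trans (norm_le_pi_norm (e t) l) (heb t ht)
        have h2 : |d t l| ≤ cC q * (M + M) :=
          le_trans (norm_le_pi_norm (d t) l) (hdb t ht)
        have : e t l * d t l + d t l * e t l = 2 * (e t l * d t l) := by ring
        rw [this, abs_mul, abs_mul, abs_two]
        have := mul_le_mul h1 h2 (abs_nonneg _) ((abs_nonneg _).trans h1)
        nlinarith [abs_nonneg (e t l), abs_nonneg (d t l)]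
      calc ∑ l, |e t l * d t l + d t l * e t l|
          ≤ ∑ _l : Fin (p q), 2 * (cC q * (L + L)) * (cC q * (M + M)) :=
            Finset.sum_le_sum fun l _ => hterm l
        _ = K := by simp [hK, Finset.sum_const, Finset.card_univ, nsmul_eq_mul]
    have hglip : ∀ s t, 0 ≤ s → 0 ≤ t → |g s - g t| ≤ K * |s - t| := by
      intro s t hs ht
      have := Convex.norm_image_sub_le_of_norm_hasDerivWithin_le
        (f := g) (f' := fun u => ∑ l, (e u l * d u l + d u l * e u l)) (s := Set.Ici (0:ℝ))
        (fun u hu => (hgd u hu).hasDerivWithinAt) (fun u hu => hgdb u hu) (convex_Ici 0) ht hs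
      simpa [Real.norm_eq_abs] using this
    have hkd : ∀ t, 0 ≤ t → HasDerivAt (k q a b) (γ q a b * g t) t := by
      intro t ht
      have h0 := hkode q a b hadj t ht
      have heqg : (C q *ᵥ x a t - C q *ᵥ x b t) ⬝ᵥ (C q *ᵥ x a t - C q *ᵥ x b t) = g t := by
        have hsub : C q *ᵥ x a t - C q *ᵥ x b t = C q *ᵥ (x a t - x b t) :=
          (Matrix.mulVec_sub _ _ _).symm
        rw [hg, hd, hsub]
        simp [dotProduct]
      rwa [heqg] at h0
    have hg0 : ∀ t, 0 ≤ t → 0 ≤ g t := by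
      intro t ht
      rw [hg]
      exact Finset.sum_nonneg fun l _ => mul_self_nonneg _
    have hkub : ∀ t, 0 ≤ t → k q a b t ≤ M :=
      fun t ht => (le_abs_self _).trans (hkM q a b t ht)
    have hgtend : Tendsto g atTop (𝓝 0) :=
      barbalat_s1 (hγpos q a b hadj) hkd hg0 hglip hkub
    have hdtend : Tendsto d atTop (𝓝 0) := by
      rw [tendsto_pi_nhds]
      intro l
      have hsq : ∀ t, 0 ≤ t → |d t l| ≤ Real.sqrt (g t) := by
        intro t ht
        apply Real.abs_le_sqrt
        rw [pow_two, hg]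
        exact Finset.single_le_sum (f := fun l' => d t l' * d t l')
          (fun l' _ => mul_self_nonneg _) (Finset.mem_univ l)
      have hsqrt : Tendsto (fun t => Real.sqrt (g t)) atTop (𝓝 0) := by
        have := (Real.continuous_sqrt.tendsto 0).comp hgtend
        simpa [Function.comp_def] using this
      have habs : Tendsto (fun t => |d t l|) atTop (𝓝 0) := by
        refine squeeze_zero' (Eventually.of_forall fun t => abs_nonneg _) ?_ hsqrt
        filter_upwards [eventually_ge_atTop (0:ℝ)] with t ht using hsq t ht
      have : Tendsto (fun t => d t l) atTop (𝓝 0) := by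
        rw [tendsto_zero_iff_norm_tendsto_zero]
        simpa [Real.norm_eq_abs] using habs
      simpa using this
    exact hdtend
  -- walks
  have hwalk : ∀ a b : Fin N, (G q).Walk a b →
      Tendsto (fun t => C q *ᵥ (x a t - x b t)) atTop (𝓝 0) := by
    intro a b w
    induction w with
    | nil =>
      have hz : ∀ c : Fin N, (fun t => C q *ᵥ (x c t - x c t)) = fun _ => (0 : Fin (p q) → ℝ) := by
        intro c; funext t; simp
      rw [hz]
      exact tendsto_const_nhds
    | @cons u w' b' hadj pw ih =>
      have h1 := hedge u w' hadj
      have h2 : (fun t => C q *ᵥ (x u t - x b' t))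
          = fun t => (C q *ᵥ (x u t - x w' t)) + (C q *ᵥ (x w' t - x b' t)) := by
        funext t
        rw [← Matrix.mulVec_add, sub_add_sub_cancel]
      rw [h2]
      simpa using h1.add ih
  have hpair : ∀ b, Tendsto (fun t => C q *ᵥ (x i t - x b t)) atTop (𝓝 0) := fun b =>
    hwalk i b ((hG q).preconnected i b).some
  -- conclusion
  have hNne : (N:ℝ) ≠ 0 := Nat.cast_ne_zero.2 i.pos.ne'
  have hfun : (fun t => C q *ᵥ (x i t - (N:ℝ)⁻¹ • ∑ j, x j t))
      = fun t => (N:ℝ)⁻¹ • ∑ j, C q *ᵥ (x i t - x j t) := by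
    funext t
    have harg : x i t - (N:ℝ)⁻¹ • ∑ j, x j t = (N:ℝ)⁻¹ • ∑ j, (x i t - x j t) := by
      rw [Finset.sum_sub_distrib, Finset.sum_const, Finset.card_univ, Fintype.card_fin,
        smul_sub, ← Nat.cast_smul_eq_nsmul ℝ, smul_smul, inv_mul_cancel₀ hNne, one_smul]
    rw [harg, Matrix.mulVec_smul]
    have hms : C q *ᵥ (∑ j, (x i t - x j t)) = ∑ j, C q *ᵥ (x i t - x j t) := by
      simpa [Matrix.mulVecLin_apply] using
        map_sum ((C q).mulVecLin) (fun j => x i t - x j t) Finset.univ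
    rw [hms]
  rw [hfun]
  have hsum := tendsto_finset_sum (Finset.univ : Finset (Fin N)) (fun j _ => hpair j)
  have := hsum.const_smul ((N:ℝ)⁻¹)
  simpa using this
end

section
/- Let X ⊆ ℝⁿ be a convex set, f : ℝⁿ → ℝⁿ continuously differentiable, C ∈ ℝ^{p×n}, θ > 0, and P ∈ ℝ^{n×n} symmetric positive definite such that P·J(x) + J(x)ᵀ·P ⪯ θ·CᵀC for all x ∈ X, where J(x) is the Jacobian of f at x. Then for any a, b ∈ X, (b − a)ᵀ·P·(f(b) − f(a)) ≤ (θ/2)·|C·(b − a)|², where |·| is the Euclidean norm on ℝᵖ. -/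
open Matrix

/-- The incremental dissipation inequality: if
`P J(x) + J(x)ᵀ P ⪯ θ CᵀC` on a convex set `X` (with `P` symmetric positive definite,
`θ > 0`), then for all `a, b ∈ X`,
`(b - a)ᵀ P (f(b) - f(a)) ≤ (θ/2) |C (b - a)|²`. -/
theorem incremental_quadratic_bound
    {n p : ℕ}
    (X : Set (Fin n → ℝ)) (hX : Convex ℝ X)
    (f : (Fin n → ℝ) → (Fin n → ℝ))
    (J : (Fin n → ℝ) → Matrix (Fin n) (Fin n) ℝ)
    (hf : ∀ z, HasFDerivAt f ((J z).mulVecLin.toContinuousLinearMap) z)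
    (hJcont : Continuous J)
    (C : Matrix (Fin p) (Fin n) ℝ)
    (θ : ℝ) (hθ : 0 < θ)
    (P : Matrix (Fin n) (Fin n) ℝ) (hP : P.PosDef)
    (hLMI : ∀ z ∈ X, ∀ v : Fin n → ℝ,
      v ⬝ᵥ ((P * J z + (J z)ᵀ * P) *ᵥ v) ≤ θ * ((C *ᵥ v) ⬝ᵥ (C *ᵥ v)))
    (a b : Fin n → ℝ) (ha : a ∈ X) (hb : b ∈ X) :
    (b - a) ⬝ᵥ (P *ᵥ (f b - f a)) ≤
      (θ / 2) * ((C *ᵥ (b - a)) ⬝ᵥ (C *ᵥ (b - a))) := by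
  set v : Fin n → ℝ := b - a with hv
  set u : Fin n → ℝ := P *ᵥ v with hu
  set K : ℝ := (θ / 2) * ((C *ᵥ v) ⬝ᵥ (C *ᵥ v)) with hK
  set γ : ℝ → (Fin n → ℝ) := fun s => a + s • v with hγ
  have hPsymm : Pᵀ = P := hP.1
  have hvecP : ∀ w : Fin n → ℝ, v ⬝ᵥ (P *ᵥ w) = u ⬝ᵥ w := by
    intro w
    rw [dotProduct_mulVec, hu, ← hPsymm, vecMul_transpose, hPsymm]
  -- derivative of γ
  have hγd : ∀ s : ℝ, HasDerivAt γ v s := by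
    intro s
    have h1 : HasDerivAt (fun s : ℝ => s • v) ((1:ℝ) • v) s :=
      (hasDerivAt_id s).smul_const v
    simpa [hγ] using h1.const_add a
  -- derivative of f ∘ γ
  have hfγ : ∀ s : ℝ, HasDerivAt (fun s => f (γ s)) (J (γ s) *ᵥ v) s := by
    intro s
    have := (hf (γ s)).comp_hasDerivAt s (hγd s)
    exact this
  -- derivative of φ := fun s => u ⬝ᵥ f (γ s)
  have hφ : ∀ s : ℝ, HasDerivAt (fun s => u ⬝ᵥ f (γ s)) (u ⬝ᵥ (J (γ s) *ᵥ v)) s := by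
    intro s
    have hcomp : ∀ i : Fin n, HasDerivAt (fun s => f (γ s) i) ((J (γ s) *ᵥ v) i) s := by
      intro i
      exact ((ContinuousLinearMap.proj i : ((Fin n → ℝ) →L[ℝ] ℝ)).hasFDerivAt).comp_hasDerivAt
        s (hfγ s)
    have hsum : HasDerivAt (fun s => ∑ i, u i * f (γ s) i)
        (∑ i, u i * (J (γ s) *ᵥ v) i) s :=
      HasDerivAt.fun_sum (fun i _ => (hcomp i).const_mul (u i))
    simpa [dotProduct] using hsum
  -- pointwise bound on derivative for s ∈ [0,1]
  have hbound : ∀ s ∈ Set.Icc (0:ℝ) 1, u ⬝ᵥ (J (γ s) *ᵥ v) ≤ K := by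
    intro s hs
    have hmem : γ s ∈ X := by
      have h2 : (1 - s) • a + s • b = γ s := by
        simp only [hγ, hv, smul_sub, sub_smul, one_smul]
        abel
      rw [← h2]
      exact hX ha hb (by linarith [hs.2]) hs.1 (by ring)
    have hlmi := hLMI (γ s) hmem v
    have key : v ⬝ᵥ ((P * J (γ s) + (J (γ s))ᵀ * P) *ᵥ v)
        = 2 * (u ⬝ᵥ (J (γ s) *ᵥ v)) := by
      have e1 : v ⬝ᵥ ((P * J (γ s)) *ᵥ v) = u ⬝ᵥ (J (γ s) *ᵥ v) := by
        rw [← mulVec_mulVec]; exact hvecP _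
      have e2 : v ⬝ᵥ (((J (γ s))ᵀ * P) *ᵥ v) = u ⬝ᵥ (J (γ s) *ᵥ v) := by
        rw [← mulVec_mulVec, dotProduct_mulVec, vecMul_transpose, dotProduct_comm]
      rw [add_mulVec, dotProduct_add, e1, e2]; ring
    rw [key] at hlmi
    linarith
  -- ψ := φ - K * s is antitone on [0,1]
  set ψ : ℝ → ℝ := fun s => u ⬝ᵥ f (γ s) - K * s with hψdef
  have hψd : ∀ s : ℝ, HasDerivAt ψ (u ⬝ᵥ (J (γ s) *ᵥ v) - K) s := by
    intro s
    have hK' : HasDerivAt (fun s : ℝ => K * s) K s := by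
      simpa using (hasDerivAt_id s).const_mul K
    exact (hφ s).sub hK'
  have hanti : AntitoneOn ψ (Set.Icc 0 1) := by
    apply antitoneOn_of_deriv_nonpos (convex_Icc 0 1)
    · exact fun s _ => ((hψd s).continuousAt).continuousWithinAt
    · intro s hs
      exact ((hψd s).differentiableAt).differentiableWithinAt
    · intro s hs
      rw [interior_Icc] at hs
      rw [(hψd s).deriv]
      have := hbound s ⟨le_of_lt hs.1, le_of_lt hs.2⟩
      linarith
  have h01 := hanti (Set.left_mem_Icc.2 zero_le_one) (Set.right_mem_Icc.2 zero_le_one)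
    zero_le_one
  have hγ0 : γ 0 = a := by simp [hγ]
  have hγ1 : γ 1 = b := by simp [hγ, hv]
  rw [hψdef] at h01
  simp only [hγ0, hγ1, mul_zero, mul_one, sub_zero] at h01
  calc v ⬝ᵥ (P *ᵥ (f b - f a)) = u ⬝ᵥ (f b - f a) := hvecP _
    _ = u ⬝ᵥ f b - u ⬝ᵥ f a := by rw [dotProduct_sub]
    _ ≤ K := by linarith
end

section
/- Let G be an undirected connected graph on nodes 1,…,N with graph Laplacian second-smallest eigenvalue λ₂ > 0, let f, B, C satisfy the Assumption (OFP), and let xᵢ, kᵢⱼ be a continuously differentiable solution of the adaptively coupled system with xᵢ(t) ∈ X for all t in an interval [0,T). Fix any constant k* with 2·k*·λ₂ − θ > 0, set k*ᵢⱼ = k* if i,j are adjacent in G and k*ᵢⱼ = 0 otherwise, and define V(t) = ∑_{i=1}^N x̃ᵢ(t)ᵀ·P·x̃ᵢ(t) + ∑_{i=1}^N ∑_{j=1}^N (1/(2γᵢⱼ))·(kᵢⱼ(t) − k*ᵢⱼ)² (terms with non-adjacent i,j interpreted as zero). Then V is differentiable on [0,T) and satisfies V̇(t) ≤ −(2·k*·λ₂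 − θ)·∑_{i=1}^N |ỹᵢ(t)|² for all t ∈ [0,T). -/
open Matrix

section Helpers

lemma sum_dotProduct'_s8 {ι m : Type*} [Fintype ι] [Fintype m] (g : ι → m → ℝ) (w : m → ℝ) :
    (∑ i, g i) ⬝ᵥ w = ∑ i, g i ⬝ᵥ w := by
  simp only [dotProduct, Finset.sum_apply, Finset.sum_mul]
  exact Finset.sum_comm

lemma dotProduct_sum'_s8 {ι m : Type*} [Fintype ι] [Fintype m] (w : m → ℝ) (g : ι → m → ℝ) :
    w ⬝ᵥ (∑ i, g i) = ∑ i, w ⬝ᵥ g i := by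
  simp only [dotProduct, Finset.sum_apply, Finset.mul_sum]
  exact Finset.sum_comm

lemma mulVec_sum'_s8 {ι m l : Type*} [Fintype ι] [Fintype m] [Fintype l] (L : Matrix l m ℝ)
    (g : ι → m → ℝ) : L *ᵥ (∑ i, g i) = ∑ i, L *ᵥ g i := by
  ext j
  simp only [mulVec, dotProduct, Finset.sum_apply, Finset.mul_sum]
  exact Finset.sum_comm


lemma hasDerivAt_dotP {n : ℕ} (P : Matrix (Fin n) (Fin n) ℝ) (u v : ℝ → Fin n → ℝ)
    (u' v' : Fin n → ℝ) (t : ℝ) (hu : HasDerivAt u u' t) (hv : HasDerivAt v v' t) :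
    HasDerivAt (fun s => u s ⬝ᵥ (P *ᵥ v s)) (u' ⬝ᵥ (P *ᵥ v t) + u t ⬝ᵥ (P *ᵥ v')) t := by
  have hcoord : ∀ i : Fin n, HasDerivAt (fun s => u s i) (u' i) t := by
    intro i
    have := (ContinuousLinearMap.proj (R := ℝ) (φ := fun _ : Fin n => ℝ) i).hasFDerivAt.comp_hasDerivAt t hu
    simpa [Function.comp_def] using this
  have hPv : ∀ i : Fin n, HasDerivAt (fun s => (P *ᵥ v s) i) ((P *ᵥ v') i) t := by
    intro i
    have hv2 : HasDerivAt (fun s => P *ᵥ v s) (P *ᵥ v') t := by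
      have := (P.mulVecLin.toContinuousLinearMap.hasFDerivAt (x := v t)).comp_hasDerivAt t hv
      simpa [Function.comp_def] using this
    have := (ContinuousLinearMap.proj (R := ℝ) (φ := fun _ : Fin n => ℝ) i).hasFDerivAt.comp_hasDerivAt t hv2
    simpa [Function.comp_def] using this
  have hsum : HasDerivAt (fun s => ∑ i, u s i * (P *ᵥ v s) i)
      (∑ i, (u' i * (P *ᵥ v t) i + u t i * (P *ᵥ v') i)) t :=
    HasDerivAt.fun_sum (fun i _ => (hcoord i).mul (hPv i))
  have heq : (∑ i, (u' i * (P *ᵥ v t) i + u t i * (P *ᵥ v') i))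
      = u' ⬝ᵥ (P *ᵥ v t) + u t ⬝ᵥ (P *ᵥ v') := by
    rw [Finset.sum_add_distrib]; rfl
  rw [heq] at hsum
  exact hsum

lemma mvt_bound {n p : ℕ}
    (f : (Fin n → ℝ) → (Fin n → ℝ))
    (J : (Fin n → ℝ) → Matrix (Fin n) (Fin n) ℝ)
    (hf : ∀ z, HasFDerivAt f ((J z).mulVecLin.toContinuousLinearMap) z)
    (X : Set (Fin n → ℝ)) (hX : Convex ℝ X)
    (θ : ℝ)
    (P : Matrix (Fin n) (Fin n) ℝ) (hPsymm : Pᵀ = P)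
    (C : Matrix (Fin p) (Fin n) ℝ)
    (hLMI : ∀ z ∈ X, ∀ v : Fin n → ℝ,
      v ⬝ᵥ ((P * J z + (J z)ᵀ * P) *ᵥ v) ≤ θ * ((C *ᵥ v) ⬝ᵥ (C *ᵥ v)))
    (a w : Fin n → ℝ) (ha : a ∈ X) (haw : a + w ∈ X) :
    2 * (w ⬝ᵥ (P *ᵥ (f (a + w) - f a))) ≤ θ * ((C *ᵥ w) ⬝ᵥ (C *ᵥ w)) := by
  set q : ℝ := (C *ᵥ w) ⬝ᵥ (C *ᵥ w) with hq
  -- continuous linear functional u ↦ w ⬝ᵥ P *ᵥ u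
  set ℓlin : (Fin n → ℝ) →ₗ[ℝ] ℝ :=
    { toFun := fun u => w ⬝ᵥ (P *ᵥ u)
      map_add' := fun u v => by
        show w ⬝ᵥ (P *ᵥ (u + v)) = w ⬝ᵥ (P *ᵥ u) + w ⬝ᵥ (P *ᵥ v)
        rw [mulVec_add, dotProduct_add]
      map_smul' := fun r u => by
        show w ⬝ᵥ (P *ᵥ (r • u)) = r • (w ⬝ᵥ (P *ᵥ u))
        rw [mulVec_smul, dotProduct_smul] } with hℓ
  set ℓ := ℓlin.toContinuousLinearMap with hℓ2
  set g : ℝ → ℝ := fun s => w ⬝ᵥ (P *ᵥ f (a + s • w)) with hg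
  have hpath : ∀ s : ℝ, HasDerivAt (fun s : ℝ => a + s • w) w s := by
    intro s
    simpa using ((hasDerivAt_id s).smul_const w).const_add a
  have hgd : ∀ s : ℝ, HasDerivAt g (w ⬝ᵥ (P *ᵥ (J (a + s • w) *ᵥ w))) s := by
    intro s
    have h1 : HasDerivAt (fun s : ℝ => f (a + s • w)) (J (a + s • w) *ᵥ w) s := by
      have := (hf (a + s • w)).comp_hasDerivAt s (hpath s)
      simpa [Function.comp_def] using this
    have := (ℓ.hasFDerivAt (x := f (a + s • w))).comp_hasDerivAt s h1
    exact this
  -- the comparison function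
  set φ : ℝ → ℝ := fun s => (θ / 2) * q * s - g s with hφ
  have hφd : ∀ s : ℝ, HasDerivAt φ ((θ / 2) * q - w ⬝ᵥ (P *ᵥ (J (a + s • w) *ᵥ w))) s := by
    intro s
    exact ((hasDerivAt_id s).const_mul ((θ/2) * q)).sub (hgd s) |>.congr_deriv (by ring)
  have hmono : MonotoneOn φ (Set.Icc (0:ℝ) 1) := by
    apply monotoneOn_of_deriv_nonneg (convex_Icc 0 1)
    · exact fun s _ => ((hφd s).differentiableAt).continuousAt.continuousWithinAt
    · intro s _
      exact ((hφd s).differentiableAt).differentiableWithinAt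
    · intro s hs
      rw [interior_Icc] at hs
      have hsIcc : s ∈ Set.Icc (0:ℝ) 1 := ⟨le_of_lt hs.1, le_of_lt hs.2⟩
      have hzX : a + s • w ∈ X := by
        have := hX ha haw (by linarith [hs.2] : (0:ℝ) ≤ 1 - s) (le_of_lt hs.1) (by ring)
        convert this using 1
        module
      rw [(hφd s).deriv]
      have hb := hLMI _ hzX w
      have hsplit : w ⬝ᵥ ((P * J (a + s • w) + (J (a + s • w))ᵀ * P) *ᵥ w)
          = 2 * (w ⬝ᵥ (P *ᵥ (J (a + s • w) *ᵥ w))) := by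
        set Jz := J (a + s • w)
        rw [add_mulVec, dotProduct_add, ← mulVec_mulVec, ← mulVec_mulVec]
        have h2 : w ⬝ᵥ (Jzᵀ *ᵥ (P *ᵥ w)) = w ⬝ᵥ (P *ᵥ (Jz *ᵥ w)) := by
          rw [dotProduct_mulVec w Jzᵀ, vecMul_transpose, dotProduct_mulVec w P,
            ← transpose_transpose P, vecMul_transpose, transpose_transpose, hPsymm,
            dotProduct_comm]
        rw [h2]; ring
      rw [hsplit] at hb
      linarith
  have h01 := hmono (Set.mem_Icc.mpr ⟨le_refl 0, zero_le_one⟩)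
    (Set.mem_Icc.mpr ⟨zero_le_one, le_refl 1⟩) zero_le_one
  have hg0 : g 0 = w ⬝ᵥ (P *ᵥ f a) := by simp [hg]
  have hg1 : g 1 = w ⬝ᵥ (P *ᵥ f (a + w)) := by simp [hg]
  simp only [hφ, hg, zero_smul, one_smul, add_zero, mul_zero, mul_one] at h01
  have : 2 * (w ⬝ᵥ (P *ᵥ f (a + w)) - w ⬝ᵥ (P *ᵥ f a)) ≤ θ * q := by linarith
  calc 2 * (w ⬝ᵥ (P *ᵥ (f (a + w) - f a)))
      = 2 * (w ⬝ᵥ (P *ᵥ f (a + w)) - w ⬝ᵥ (P *ᵥ f a)) := by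
        rw [mulVec_sub, dotProduct_sub]
    _ ≤ θ * q := this

lemma quad_lower {N : ℕ} [NeZero N] (L : Matrix (Fin N) (Fin N) ℝ) (hL : L.PosSemidef)
    (lam2 : ℝ)
    (hmin : ∀ μ : ℝ, (∃ v : Fin N → ℝ, v ≠ 0 ∧ L *ᵥ v = μ • v) → μ = 0 ∨ lam2 ≤ μ)
    (hker : ∀ v : Fin N → ℝ, L *ᵥ v = 0 → ∀ i j, v i = v j)
    (v : Fin N → ℝ) (hv : ∑ i, v i = 0) :
    lam2 * (v ⬝ᵥ v) ≤ v ⬝ᵥ (L *ᵥ v) := by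
  have hH := hL.1
  set b := hH.eigenvectorBasis with hb
  set μ := hH.eigenvalues with hμ
  set c : Fin N → ℝ := fun i => (b i : Fin N → ℝ) ⬝ᵥ v with hc
  have hortho : ∀ i j, (b i : Fin N → ℝ) ⬝ᵥ (b j : Fin N → ℝ) = if i = j then 1 else 0 := by
    intro i j
    have := (orthonormal_iff_ite.mp b.orthonormal) i j
    rw [dotProduct_comm]
    simpa [PiLp.inner_apply, RCLike.inner_apply, dotProduct, conj_trivial] using this
  have hrepr : v = ∑ i, c i • (b i : Fin N → ℝ) := by
    have h := b.sum_repr' (WithLp.toLp 2 v)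
    have h2 : ∀ i, (inner ℝ (b i) (WithLp.toLp 2 v) : ℝ) = c i := by
      intro i
      simp [PiLp.inner_apply, RCLike.inner_apply, dotProduct, conj_trivial, hc, mul_comm]
    funext j
    have := congrFun (congrArg (fun z : EuclideanSpace ℝ (Fin N) => (z : Fin N → ℝ)) h.symm) j
    simpa [Finset.sum_apply, h2] using this
  have heig : ∀ i, L *ᵥ (b i : Fin N → ℝ) = μ i • (b i : Fin N → ℝ) :=
    fun i => hH.mulVec_eigenvectorBasis i
  have hLv : L *ᵥ v = ∑ i, (c i * μ i) • (b i : Fin N → ℝ) := by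
    conv_lhs => rw [hrepr]
    rw [mulVec_sum'_s8]
    refine Finset.sum_congr rfl fun i _ => ?_
    rw [mulVec_smul, heig i, smul_smul]
  have key : ∀ (d e : Fin N → ℝ),
      (∑ i, d i • (b i : Fin N → ℝ)) ⬝ᵥ (∑ i, e i • (b i : Fin N → ℝ)) = ∑ i, d i * e i := by
    intro d e
    rw [sum_dotProduct'_s8]
    refine Finset.sum_congr rfl fun i _ => ?_
    rw [dotProduct_sum'_s8]
    rw [Finset.sum_eq_single i]
    · rw [smul_dotProduct, dotProduct_smul, hortho i i]; simp
    · intro j _ hj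
      rw [smul_dotProduct, dotProduct_smul, hortho i j, if_neg (Ne.symm hj)]; simp
    · simp
  have hquad : v ⬝ᵥ (L *ᵥ v) = ∑ i, μ i * c i ^ 2 := by
    rw [hLv]; conv_lhs => rw [hrepr]
    rw [key]
    refine Finset.sum_congr rfl fun i _ => ?_; ring
  have hnorm : v ⬝ᵥ v = ∑ i, c i ^ 2 := by
    conv_lhs => rw [hrepr]
    rw [key]
    refine Finset.sum_congr rfl fun i _ => ?_; ring
  have hczero : ∀ i, μ i = 0 → c i = 0 := by
    intro i hμi
    have hk : L *ᵥ (b i : Fin N → ℝ) = 0 := by rw [heig i, hμi, zero_smul]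
    have hconst := hker _ hk
    obtain ⟨i₀⟩ : Nonempty (Fin N) := ⟨⟨0, Nat.pos_of_ne_zero (NeZero.ne N)⟩⟩
    have : c i = (b i : Fin N → ℝ) i₀ * ∑ j, v j := by
      rw [hc]; simp only [dotProduct, Finset.mul_sum]
      exact Finset.sum_congr rfl fun j _ => by rw [hconst j i₀]
    rw [this, hv, mul_zero]
  rw [hquad, hnorm, Finset.mul_sum]
  refine Finset.sum_le_sum fun i _ => ?_
  have hbne : (b i : Fin N → ℝ) ≠ 0 := by
    intro hzero
    exact b.orthonormal.ne_zero i (by ext j; exact congrFun hzero j)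
  rcases hmin (μ i) ⟨(b i : Fin N → ℝ), hbne, heig i⟩ with h0 | hge
  · rw [h0, hczero i h0]; simp
  · nlinarith [sq_nonneg (c i)]

end Helpers


/-- Lyapunov decrease: for the adaptively coupled system under Assumption
(OFP), with `λ₂` the second-smallest Laplacian eigenvalue and any `k*` with
`2 k* λ₂ - θ > 0`, the function
`V(t) = ∑ᵢ x̃ᵢᵀ P x̃ᵢ + ∑ᵢ∑ⱼ (1/(2γᵢⱼ)) (kᵢⱼ - k*ᵢⱼ)²`
is differentiable on `[0,T)` with `V̇(t) ≤ -(2 k* λ₂ - θ) ∑ᵢ |ỹᵢ(t)|²`. -/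
theorem lyapunov_decrease
    {n p N : ℕ}
    (G : SimpleGraph (Fin N)) [DecidableRel G.Adj] (hG : G.Connected)
    (f : (Fin n → ℝ) → (Fin n → ℝ))
    (J : (Fin n → ℝ) → Matrix (Fin n) (Fin n) ℝ)
    (hf : ∀ z, HasFDerivAt f ((J z).mulVecLin.toContinuousLinearMap) z)
    (hJcont : Continuous J)
    (B : Matrix (Fin n) (Fin p) ℝ) (C : Matrix (Fin p) (Fin n) ℝ)
    -- Assumption (OFP)
    (X : Set (Fin n → ℝ)) (hX : Convex ℝ X)
    (θ : ℝ) (hθ : 0 < θ)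
    (P : Matrix (Fin n) (Fin n) ℝ) (hP : P.PosDef)
    (hLMI : ∀ z ∈ X, ∀ v : Fin n → ℝ,
      v ⬝ᵥ ((P * J z + (J z)ᵀ * P) *ᵥ v) ≤ θ * ((C *ᵥ v) ⬝ᵥ (C *ᵥ v)))
    (hPB : P * B = Cᵀ)
    -- `lam2` is the second-smallest eigenvalue of the Laplacian of `G`:
    (lam2 : ℝ)
    (hlam_eig : ∃ v : Fin N → ℝ, v ≠ 0 ∧ (G.lapMatrix ℝ) *ᵥ v = lam2 • v)
    (hlam_min : ∀ μ : ℝ, (∃ v : Fin N → ℝ, v ≠ 0 ∧ (G.lapMatrix ℝ) *ᵥ v = μ • v) →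
      μ = 0 ∨ lam2 ≤ μ)
    -- the constant `k*`
    (kstar : ℝ) (hkstar : 0 < 2 * kstar * lam2 - θ)
    -- a continuously differentiable solution of the adaptively coupled system on `[0,T)`
    (T : ℝ)
    (x : Fin N → ℝ → (Fin n → ℝ)) (k : Fin N → Fin N → ℝ → ℝ)
    (γ : Fin N → Fin N → ℝ)
    (hγsym : ∀ i j, γ i j = γ j i)
    (hγpos : ∀ i j, G.Adj i j → 0 < γ i j)
    (hksym : ∀ i j t, k i j t = k j i t)
    (hknonadj : ∀ i j, ¬ G.Adj i j → ∀ t, k i j t = 0)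
    (hxode : ∀ i, ∀ t, 0 ≤ t → t < T →
      HasDerivAt (x i)
        (f (x i t) + B *ᵥ (∑ j, k i j t • (C *ᵥ x j t - C *ᵥ x i t))) t)
    (hkode : ∀ i j, G.Adj i j → ∀ t, 0 ≤ t → t < T →
      HasDerivAt (k i j)
        (γ i j * ((C *ᵥ x i t - C *ᵥ x j t) ⬝ᵥ (C *ᵥ x i t - C *ᵥ x j t))) t)
    (hXinv : ∀ i, ∀ t, 0 ≤ t → t < T → x i t ∈ X) :
    -- conclusion: `V` is differentiable on `[0,T)` and `V̇ ≤ -(2 k* λ₂ - θ) ∑ᵢ |ỹᵢ|²`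
    ∀ t, 0 ≤ t → t < T →
      ∃ d : ℝ,
        HasDerivAt (fun s =>
            (∑ i, ((x i s - (N : ℝ)⁻¹ • ∑ j, x j s) ⬝ᵥ
                (P *ᵥ (x i s - (N : ℝ)⁻¹ • ∑ j, x j s)))) +
            ∑ i, ∑ j, (1 / (2 * γ i j)) *
                (k i j s - (if G.Adj i j then kstar else 0)) ^ 2) d t ∧
        d ≤ -(2 * kstar * lam2 - θ) *
          ∑ i, ((C *ᵥ (x i t - (N : ℝ)⁻¹ • ∑ j, x j t)) ⬝ᵥ
            (C *ᵥ (x i t - (N : ℝ)⁻¹ • ∑ j, x j t))) := by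
  intro t ht0 htT
  have hNpos : 0 < N := Fin.pos_iff_nonempty.mpr hG.nonempty
  haveI : NeZero N := ⟨hNpos.ne'⟩
  -- abbreviations
  set xb : ℝ → Fin n → ℝ := fun s => (N : ℝ)⁻¹ • ∑ j, x j s with hxb
  set u : Fin N → ℝ → Fin n → ℝ := fun i s => x i s - xb s with hu
  set g : Fin N → Fin p → ℝ :=
    fun i => ∑ j, k i j t • (C *ᵥ x j t - C *ᵥ x i t) with hgdef
  set F : Fin N → Fin n → ℝ := fun i => f (x i t) + B *ᵥ g i with hF
  set Fb : Fin n → ℝ := (N : ℝ)⁻¹ • ∑ l, F l with hFb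
  set u' : Fin N → Fin n → ℝ := fun i => F i - Fb with hu'
  set y : Fin N → Fin p → ℝ := fun i => C *ᵥ (u i t) with hy
  -- derivatives of states
  have hxd : ∀ i, HasDerivAt (x i) (F i) t := fun i => hxode i t ht0 htT
  have hxbd : HasDerivAt xb Fb t :=
    (HasDerivAt.fun_sum (fun l _ => hxd l)).const_smul ((N : ℝ)⁻¹)
  have hud : ∀ i, HasDerivAt (u i) (u' i) t := fun i => (hxd i).sub hxbd
  -- derivative of the quadratic part
  have hquadd : HasDerivAt (fun s =>
      ∑ i, ((x i s - (N : ℝ)⁻¹ • ∑ j, x j s) ⬝ᵥ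
        (P *ᵥ (x i s - (N : ℝ)⁻¹ • ∑ j, x j s))))
      (∑ i, (u' i ⬝ᵥ (P *ᵥ u i t) + u i t ⬝ᵥ (P *ᵥ u' i))) t :=
    HasDerivAt.fun_sum (fun i _ => hasDerivAt_dotP P (u i) (u i) (u' i) (u' i) t (hud i) (hud i))
  -- derivative of adaptive part
  set dk : Fin N → Fin N → ℝ := fun i j =>
    if G.Adj i j then (k i j t - kstar) *
      ((C *ᵥ x i t - C *ᵥ x j t) ⬝ᵥ (C *ᵥ x i t - C *ᵥ x j t)) else 0 with hdk
  have hkd : ∀ i j, HasDerivAt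
      (fun s => (1 / (2 * γ i j)) * (k i j s - (if G.Adj i j then kstar else 0)) ^ 2)
      (dk i j) t := by
    intro i j
    by_cases hadj : G.Adj i j
    · have hk := hkode i j hadj t ht0 htT
      have h1 := (((hk.sub_const kstar).pow 2).const_mul (1 / (2 * γ i j)))
      simp only [hadj, if_true, hdk]
      refine h1.congr_deriv ?_
      have hγ := hγpos i j hadj
      field_simp
      ring
    · have hfun : (fun s => (1 / (2 * γ i j)) *
          (k i j s - (if G.Adj i j then kstar else 0)) ^ 2) = fun _ => (0:ℝ) := by
        funext s
        simp [hknonadj i j hadj s, hadj]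
      rw [hfun]
      simp only [hdk, hadj, if_false]
      exact hasDerivAt_const t 0
  have hadaptd : HasDerivAt (fun s => ∑ i, ∑ j, (1 / (2 * γ i j)) *
        (k i j s - (if G.Adj i j then kstar else 0)) ^ 2)
      (∑ i, ∑ j, dk i j) t :=
    HasDerivAt.fun_sum (fun i _ => HasDerivAt.fun_sum (fun j _ => hkd i j))
  refine ⟨_, hquadd.add hadaptd, ?_⟩
  -- names
  set S : ℝ := ∑ i, y i ⬝ᵥ y i with hSdef
  have hPsymm : Pᵀ = P := by
    rw [← conjTranspose_eq_transpose_of_trivial]; exact hP.1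
  have hsymdot : ∀ a b : Fin n → ℝ, a ⬝ᵥ (P *ᵥ b) = b ⬝ᵥ (P *ᵥ a) := by
    intro a b
    rw [dotProduct_mulVec a P, ← transpose_transpose P, vecMul_transpose,
      transpose_transpose, hPsymm, dotProduct_comm]
  have hCdiff : ∀ i j, C *ᵥ x j t - C *ᵥ x i t = y j - y i := by
    intro i j
    simp only [hy, hu, mulVec_sub]
    abel
  -- ∑ g = 0
  have hgsum : ∑ l, g l = 0 := by
    set a : Fin N → Fin N → Fin p → ℝ :=
      fun l j => k l j t • (C *ᵥ x j t - C *ᵥ x l t) with ha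
    have hanti : ∀ l j, a l j + a j l = 0 := by
      intro l j
      simp only [ha]
      rw [hksym j l t]
      rw [show C *ᵥ x l t - C *ᵥ x j t = -(C *ᵥ x j t - C *ᵥ x l t) by abel, smul_neg]
      abel
    have hcomm : ∑ l, ∑ j, a l j = ∑ l, ∑ j, a j l := Finset.sum_comm
    have h2 : (∑ l, ∑ j, a l j) + (∑ l, ∑ j, a l j) = 0 := by
      nth_rewrite 2 [hcomm]
      rw [← Finset.sum_add_distrib]
      simp_rw [← Finset.sum_add_distrib]
      exact Finset.sum_eq_zero fun l _ => Finset.sum_eq_zero fun j _ => hanti l j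
    have h3 : (2:ℝ) • (∑ l, ∑ j, a l j) = 0 := by rw [two_smul]; exact h2
    have := smul_eq_zero.mp h3
    simpa [hgdef, ha] using this.resolve_left (by norm_num)
  have hFsum : ∑ l, F l = ∑ l, f (x l t) := by
    simp only [hF]
    rw [Finset.sum_add_distrib, ← mulVec_sum'_s8, hgsum, mulVec_zero, add_zero]
  set cbar : Fin n → ℝ := f (xb t) - (N:ℝ)⁻¹ • ∑ l, f (x l t) with hcbar
  have hu'eq : ∀ i, u' i = (f (x i t) - f (xb t)) + cbar + B *ᵥ g i := by
    intro i
    simp only [hu']; rw [hFb, hFsum]; simp only [hF, hcbar]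
    abel
  have husum : ∑ i, u i t = 0 := by
    simp only [hu, hxb]
    rw [Finset.sum_sub_distrib, Finset.sum_const, Finset.card_univ, Fintype.card_fin,
      ← Nat.cast_smul_eq_nsmul ℝ, smul_smul, mul_inv_cancel₀ (by positivity : (N:ℝ) ≠ 0), one_smul,
      sub_self]
  have hysum : ∑ i, y i = 0 := by
    simp only [hy]
    rw [← mulVec_sum'_s8, husum, mulVec_zero]
  -- middle term
  have hmid : ∑ i, u i t ⬝ᵥ (P *ᵥ cbar) = 0 := by
    rw [← sum_dotProduct'_s8, husum, zero_dotProduct]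
  -- third term
  have hthird : ∀ i, u i t ⬝ᵥ (P *ᵥ (B *ᵥ g i)) = y i ⬝ᵥ g i := by
    intro i
    rw [mulVec_mulVec, hPB, dotProduct_mulVec, vecMul_transpose]
  have h4 : ∀ i, y i ⬝ᵥ g i = ∑ j, k i j t * (y i ⬝ᵥ (y j - y i)) := by
    intro i
    simp only [hgdef]
    rw [dotProduct_sum'_s8]
    refine Finset.sum_congr rfl fun j _ => ?_
    rw [hCdiff i j, dotProduct_smul]
    rfl
  -- mean value bound
  have hxbX : xb t ∈ X := by
    have h1 : xb t = ∑ j, (N:ℝ)⁻¹ • x j t := by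
      simp only [hxb]; rw [Finset.smul_sum]
    rw [h1]
    refine hX.sum_mem (fun i _ => by positivity) ?_ (fun i _ => hXinv i t ht0 htT)
    rw [Finset.sum_const, Finset.card_univ, Fintype.card_fin, nsmul_eq_mul,
      mul_inv_cancel₀ (by positivity : (N:ℝ) ≠ 0)]
  have hmvt : ∀ i, 2 * (u i t ⬝ᵥ (P *ᵥ (f (x i t) - f (xb t)))) ≤ θ * (y i ⬝ᵥ y i) := by
    intro i
    have haw : xb t + u i t = x i t := by simp only [hu]; abel
    have := mvt_bound f J hf X hX θ P hPsymm C hLMI (xb t) (u i t) hxbX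
      (by rw [haw]; exact hXinv i t ht0 htT)
    rw [haw] at this
    exact this
  -- key algebraic identity
  have hkey : (∑ i, ∑ j, 2 * (k i j t * (y i ⬝ᵥ (y j - y i)))) +
      (∑ i, ∑ j, k i j t * ((y i - y j) ⬝ᵥ (y i - y j))) = 0 := by
    have hterm : ∀ i j, 2 * (k i j t * (y i ⬝ᵥ (y j - y i))) +
        k i j t * ((y i - y j) ⬝ᵥ (y i - y j))
        = k i j t * (y j ⬝ᵥ y j - y i ⬝ᵥ y i) := by
      intro i j
      have e1 : (y i - y j) ⬝ᵥ (y i - y j)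
          = y i ⬝ᵥ y i - 2 * (y i ⬝ᵥ y j) + y j ⬝ᵥ y j := by
        rw [dotProduct_sub, sub_dotProduct, sub_dotProduct, dotProduct_comm (y j) (y i)]
        ring
      have e2 : y i ⬝ᵥ (y j - y i) = y i ⬝ᵥ y j - y i ⬝ᵥ y i := by
        rw [dotProduct_sub]
      rw [e1, e2]; ring
    rw [← Finset.sum_add_distrib]
    simp_rw [← Finset.sum_add_distrib, hterm]
    -- antisymmetric sum vanishes
    set a : Fin N → Fin N → ℝ := fun i j => k i j t * (y j ⬝ᵥ y j - y i ⬝ᵥ y i) with ha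
    have hanti : ∀ i j, a i j + a j i = 0 := by
      intro i j
      simp only [ha]
      rw [hksym j i t]; ring
    have hcomm : ∑ i, ∑ j, a i j = ∑ i, ∑ j, a j i := Finset.sum_comm
    have h2 : (∑ i, ∑ j, a i j) + (∑ i, ∑ j, a i j) = 0 := by
      nth_rewrite 2 [hcomm]
      rw [← Finset.sum_add_distrib]
      simp_rw [← Finset.sum_add_distrib]
      exact Finset.sum_eq_zero fun i _ => Finset.sum_eq_zero fun j _ => hanti i j
    linarith
  -- adaptive derivative sum split
  set LapSum : ℝ := ∑ i, ∑ j, (if G.Adj i j then ((y i - y j) ⬝ᵥ (y i - y j)) else 0)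
    with hLapSum
  have hd2split : ∑ i, ∑ j, dk i j =
      (∑ i, ∑ j, k i j t * ((y i - y j) ⬝ᵥ (y i - y j))) - kstar * LapSum := by
    rw [hLapSum, Finset.mul_sum, ← Finset.sum_sub_distrib]
    refine Finset.sum_congr rfl fun i _ => ?_
    rw [Finset.mul_sum, ← Finset.sum_sub_distrib]
    refine Finset.sum_congr rfl fun j _ => ?_
    have hq : C *ᵥ x i t - C *ᵥ x j t = y i - y j := hCdiff j i
    simp only [hdk, hq]
    by_cases hadj : G.Adj i j
    · simp only [hadj, if_true]; ring
    · simp only [hadj, if_false, hknonadj i j hadj t]; ring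
  -- positivity facts
  have hpsd := SimpleGraph.posSemidef_lapMatrix ℝ G
  have hlam2nonneg : 0 ≤ lam2 := by
    obtain ⟨v0, hv0, heq⟩ := hlam_eig
    have h0 : 0 ≤ v0 ⬝ᵥ ((G.lapMatrix ℝ) *ᵥ v0) := by
      simpa [star_trivial] using hpsd.dotProduct_mulVec_nonneg v0
    rw [heq, dotProduct_smul, smul_eq_mul] at h0
    have hvnn : 0 ≤ v0 ⬝ᵥ v0 :=
      Finset.sum_nonneg fun i _ => mul_self_nonneg (v0 i)
    have hvpos : 0 < v0 ⬝ᵥ v0 := by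
      rcases lt_or_eq_of_le hvnn with h | h
      · exact h
      · exact absurd ((dotProduct_self_eq_zero).mp h.symm) hv0
    nlinarith
  have hkstarpos : 0 < kstar := by nlinarith
  -- kernel characterization
  have hker : ∀ v : Fin N → ℝ, (G.lapMatrix ℝ) *ᵥ v = 0 → ∀ i j, v i = v j := by
    intro v hv i j
    have h1 : Matrix.toLin' (G.lapMatrix ℝ) v = 0 := by
      rw [Matrix.toLin'_apply]; exact hv
    exact (SimpleGraph.lapMatrix_mulVec_eq_zero_iff_forall_reachable (G := G) (x := v)).mp hv i j (hG.preconnected i j)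
  -- Laplacian spectral bound
  have hlap : 2 * lam2 * S ≤ LapSum := by
    have hper : ∀ i j, (if G.Adj i j then ((y i - y j) ⬝ᵥ (y i - y j)) else 0)
        = ∑ α : Fin p, (if G.Adj i j then (y i α - y j α)^2 else 0) := by
      intro i j
      by_cases hadj : G.Adj i j
      · simp only [hadj, if_true, dotProduct, Pi.sub_apply]
        exact Finset.sum_congr rfl fun α _ => by ring
      · simp [hadj]
    have hexp : LapSum = ∑ α : Fin p, ∑ i, ∑ j,
        (if G.Adj i j then (y i α - y j α)^2 else 0) := by
      calc LapSum = ∑ i, ∑ j, ∑ α : Fin p, (if G.Adj i j then (y i α - y j α)^2 else 0) := by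
            rw [hLapSum]
            exact Finset.sum_congr rfl fun i _ => Finset.sum_congr rfl fun j _ => hper i j
        _ = ∑ i, ∑ α : Fin p, ∑ j, (if G.Adj i j then (y i α - y j α)^2 else 0) :=
            Finset.sum_congr rfl fun i _ => Finset.sum_comm
        _ = ∑ α : Fin p, ∑ i, ∑ j, (if G.Adj i j then (y i α - y j α)^2 else 0) :=
            Finset.sum_comm
    have hα : ∀ α : Fin p, 2 * (lam2 * ((fun i => y i α) ⬝ᵥ (fun i => y i α)))
        ≤ ∑ i, ∑ j, (if G.Adj i j then (y i α - y j α)^2 else 0) := by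
      intro α
      have hv0 : ∑ i, y i α = 0 := by
        have := congrFun hysum α
        simpa [Finset.sum_apply] using this
      have hq := quad_lower (G.lapMatrix ℝ) hpsd lam2 hlam_min hker (fun i => y i α) hv0
      have hform : (fun i => y i α) ⬝ᵥ ((G.lapMatrix ℝ) *ᵥ (fun i => y i α))
          = (∑ i, ∑ j, (if G.Adj i j then (y i α - y j α)^2 else 0)) / 2 := by
        rw [← Matrix.toLinearMap₂'_apply', SimpleGraph.lapMatrix_toLinearMap₂']
      rw [hform] at hq
      linarith
    have hSexp : ∑ α : Fin p, ((fun i => y i α) ⬝ᵥ (fun i => y i α)) = S := by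
      rw [hSdef]
      simp only [dotProduct]
      exact Finset.sum_comm
    calc 2 * lam2 * S = ∑ α : Fin p, 2 * (lam2 * ((fun i => y i α) ⬝ᵥ (fun i => y i α))) := by
          rw [← hSexp, Finset.mul_sum]
          exact Finset.sum_congr rfl fun α _ => by ring
      _ ≤ ∑ α : Fin p, ∑ i, ∑ j, (if G.Adj i j then (y i α - y j α)^2 else 0) :=
          Finset.sum_le_sum fun α _ => hα α
      _ = LapSum := hexp.symm
  -- assemble
  have h1 : ∑ i, (u' i ⬝ᵥ (P *ᵥ u i t) + u i t ⬝ᵥ (P *ᵥ u' i))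
      = ∑ i, 2 * (u i t ⬝ᵥ (P *ᵥ u' i)) := by
    refine Finset.sum_congr rfl fun i _ => ?_
    rw [hsymdot (u' i) (u i t)]; ring
  have h2 : ∀ i, u i t ⬝ᵥ (P *ᵥ u' i)
      = u i t ⬝ᵥ (P *ᵥ (f (x i t) - f (xb t))) + u i t ⬝ᵥ (P *ᵥ cbar) + y i ⬝ᵥ g i := by
    intro i
    rw [hu'eq i, mulVec_add, mulVec_add, dotProduct_add, dotProduct_add, hthird i]
  have hd1 : ∑ i, (u' i ⬝ᵥ (P *ᵥ u i t) + u i t ⬝ᵥ (P *ᵥ u' i))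
      = (∑ i, 2 * (u i t ⬝ᵥ (P *ᵥ (f (x i t) - f (xb t)))))
        + (∑ i, ∑ j, 2 * (k i j t * (y i ⬝ᵥ (y j - y i)))) := by
    rw [h1]
    have hh : ∀ i, 2 * (u i t ⬝ᵥ (P *ᵥ u' i))
        = 2 * (u i t ⬝ᵥ (P *ᵥ (f (x i t) - f (xb t)))) + 2 * (u i t ⬝ᵥ (P *ᵥ cbar))
          + ∑ j, 2 * (k i j t * (y i ⬝ᵥ (y j - y i))) := by
      intro i
      rw [h2 i, h4 i, mul_add, mul_add, Finset.mul_sum]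
    simp_rw [hh]
    rw [Finset.sum_add_distrib, Finset.sum_add_distrib]
    have hz : ∑ i, 2 * (u i t ⬝ᵥ (P *ᵥ cbar)) = 0 := by
      rw [← Finset.mul_sum, hmid, mul_zero]
    rw [hz, add_zero]
  have hfin : (∑ i, (u' i ⬝ᵥ (P *ᵥ u i t) + u i t ⬝ᵥ (P *ᵥ u' i))) + ∑ i, ∑ j, dk i j
      ≤ -(2 * kstar * lam2 - θ) * S := by
    rw [hd1, hd2split]
    have e1 : ∑ i, 2 * (u i t ⬝ᵥ (P *ᵥ (f (x i t) - f (xb t)))) ≤ θ * S := by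
      rw [hSdef, Finset.mul_sum]
      exact Finset.sum_le_sum fun i _ => hmvt i
    have e2 : kstar * (2 * lam2 * S) ≤ kstar * LapSum :=
      mul_le_mul_of_nonneg_left hlap (le_of_lt hkstarpos)
    nlinarith [hkey]
  exact hfin
end
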